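/- arXiv:1003.2070 — 7 statements merged into one kernel-verified Lean document; each statement's English description precedes it below -/
import Mathlib

section
/- The category M(X) of representations of a finite crossed module X, with objects finite-dimensional X₂-graded vector spaces V = ⊕_{m∈X₂} V_m equipped with an X₁-action Q satisfying P(m)Q(g) = Q(g)P(m^g) (where P(m) is the projection onto V_m), is a k-linear abelian category with tensor product given by (V⊗W)_m = ⊕_{nl=m} V_n ⊗ W_l and diagonal X₁-action; the maps R_{V,W}(v⊗w) = Σ_{m∈X₂} Q_W(∂m)w ⊗ P_V(m)v define a braiding on this tensor category. -/
/-- A crossed module: groups `X₁`, `X₂`, a right action of `X₁` on `X₂` by group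
automorphisms (written `act m g` for `m^g`), and a boundary homomorphism
`δ : X₂ →* X₁` satisfying equivariance and the Peiffer identity. -/
structure CrossedModule (X₁ X₂ : Type) [Group X₁] [Group X₂] where
  act : X₂ → X₁ → X₂
  act_one : ∀ m : X₂, act m 1 = m
  act_mul : ∀ (m : X₂) (g h : X₁), act m (g * h) = act (act m g) h
  act_hom : ∀ (m n : X₂) (g : X₁), act (m * n) g = act m g * act n g
  δ : X₂ →* X₁
  equivariance : ∀ (m : X₂) (g : X₁), δ (act m g) = g⁻¹ * δ m * g
  peiffer : ∀ m n : X₂, act m (δ n) = n⁻¹ * m * n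

section Representations
open TensorProduct

variable {F : Type} [Field F] {X₁ X₂ : Type} [Group X₁] [Group X₂] [Fintype X₁] [Fintype X₂] [DecidableEq X₂]

/-- A representation of the crossed module `X` on the `F`-vector space `V`:
an `X₂`-grading, encoded by the family of projections `P m` onto the graded
components, together with an `X₁`-action `Q` such that `P(m)Q(g) = Q(g)P(m^g)`.
These are the objects of the category `M(X)`. -/
structure XRep (F : Type) [Field F] {X₁ X₂ : Type} [Group X₁] [Group X₂] [Fintype X₂] [DecidableEq X₂]
    (X : CrossedModule X₁ X₂)
    (V : Type) [AddCommGroup V] [Module F V] where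
  P : X₂ → (V →ₗ[F] V)
  Q : X₁ → (V →ₗ[F] V)
  P_orth : ∀ m n : X₂, (P m) ∘ₗ (P n) = if m = n then P m else 0
  P_total : (∑ m : X₂, P m) = LinearMap.id
  Q_one : Q 1 = LinearMap.id
  Q_mul : ∀ g h : X₁, Q (g * h) = Q g ∘ₗ Q h
  PQ_compat : ∀ (m : X₂) (g : X₁), (P m) ∘ₗ (Q g) = (Q g) ∘ₗ (P (X.act m g))

variable {X : CrossedModule X₁ X₂}
variable {U V W U' V' W' : Type}
  [AddCommGroup U] [Module F U] [AddCommGroup V] [Module F V] [AddCommGroup W] [Module F W]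
  [AddCommGroup U'] [Module F U'] [AddCommGroup V'] [Module F V'] [AddCommGroup W'] [Module F W']

/-- The grading of the tensor product: `(V ⊗ W)_m = ⊕_{nl = m} V_n ⊗ W_l`. -/
noncomputable def tensorP (A : XRep F X V) (B : XRep F X W) (m : X₂) :
    (V ⊗[F] W) →ₗ[F] (V ⊗[F] W) :=
  ∑ n : X₂, TensorProduct.map (A.P n) (B.P (n⁻¹ * m))

/-- The diagonal `X₁`-action on the tensor product. -/
noncomputable def tensorQ (A : XRep F X V) (B : XRep F X W) (g : X₁) :
    (V ⊗[F] W) →ₗ[F] (V ⊗[F] W) :=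
  TensorProduct.map (A.Q g) (B.Q g)

/-- The braiding `R_{V,W}(v ⊗ w) = ∑_{m ∈ X₂} Q_W(∂m) w ⊗ P_V(m) v`, written in terms
of the grading data `PA` on `V` and the action data `QB` on `W`. -/
noncomputable def braidAux (X : CrossedModule X₁ X₂)
    (PA : X₂ → (V →ₗ[F] V)) (QB : X₁ → (W →ₗ[F] W)) :
    (V ⊗[F] W) →ₗ[F] (W ⊗[F] V) :=
  ∑ m : X₂, (TensorProduct.map (QB (X.δ m)) (PA m)) ∘ₗ
    (TensorProduct.comm F V W).toLinearMap

/-- The braiding `R_{V,W}` between two crossed-module representations. -/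
noncomputable def braid (A : XRep F X V) (B : XRep F X W) :
    (V ⊗[F] W) →ₗ[F] (W ⊗[F] V) :=
  braidAux X A.P B.Q

/-- Morphisms in `M(X)`: linear maps compatible with the grading and the action. -/
def IsXRepHom (A : XRep F X V) (B : XRep F X W) (f : V →ₗ[F] W) : Prop :=
  (∀ m : X₂, f ∘ₗ A.P m = B.P m ∘ₗ f) ∧ (∀ g : X₁, f ∘ₗ A.Q g = B.Q g ∘ₗ f)

end Representations

namespace CrossedModule
variable {X₁ X₂ : Type} [Group X₁] [Group X₂] (X : CrossedModule X₁ X₂)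

lemma act_one' (g : X₁) : X.act 1 g = 1 := by
  have h := X.act_hom 1 1 g
  rw [one_mul] at h
  exact (left_eq_mul.mp h)

lemma act_inv (m : X₂) (g : X₁) : X.act m⁻¹ g = (X.act m g)⁻¹ := by
  have h := X.act_hom m m⁻¹ g
  rw [mul_inv_cancel, X.act_one'] at h
  exact eq_inv_of_mul_eq_one_right h.symm

lemma act_leftinv (m : X₂) (g : X₁) : X.act (X.act m g) g⁻¹ = m := by
  rw [← X.act_mul, mul_inv_cancel, X.act_one]

lemma act_rightinv (m : X₂) (g : X₁) : X.act (X.act m g⁻¹) g = m := by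
  rw [← X.act_mul, inv_mul_cancel, X.act_one]

lemma act_bijective (g : X₁) : Function.Bijective (fun m : X₂ => X.act m g) :=
  Function.bijective_iff_has_inverse.mpr
    ⟨fun m => X.act m g⁻¹, fun m => X.act_leftinv m g, fun m => X.act_rightinv m g⟩

end CrossedModule

section MyHelpers
open TensorProduct

variable {F : Type} [Field F] {X₁ X₂ : Type} [Group X₁] [Group X₂] [Fintype X₁] [Fintype X₂] [DecidableEq X₂]
variable {X : CrossedModule X₁ X₂}
variable {U V W : Type}
  [AddCommGroup U] [Module F U] [AddCommGroup V] [Module F V] [AddCommGroup W] [Module F W]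

lemma XRep.P_orth_apply (A : XRep F X V) (m n : X₂) (v : V) :
    A.P m (A.P n v) = if m = n then A.P m v else 0 := by
  have h := LinearMap.congr_fun (A.P_orth m n) v
  simp only [LinearMap.comp_apply] at h
  rw [h]
  split_ifs <;> simp

lemma XRep.P_total_apply (A : XRep F X V) (v : V) : ∑ m : X₂, A.P m v = v := by
  have h := LinearMap.congr_fun A.P_total v
  simpa using h

lemma XRep.PQ_apply (A : XRep F X V) (m : X₂) (g : X₁) (v : V) :
    A.P m (A.Q g v) = A.Q g (A.P (X.act m g) v) :=
  LinearMap.congr_fun (A.PQ_compat m g) v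

lemma XRep.QP_apply (A : XRep F X V) (m : X₂) (g : X₁) (v : V) :
    A.Q g (A.P (X.act m g) v) = A.P m (A.Q g v) :=
  (LinearMap.congr_fun (A.PQ_compat m g) v).symm

lemma XRep.Q_mul_apply (A : XRep F X V) (g h : X₁) (v : V) :
    A.Q (g * h) v = A.Q g (A.Q h v) :=
  LinearMap.congr_fun (A.Q_mul g h) v

lemma XRep.Q_inv_apply (A : XRep F X V) (g : X₁) (v : V) :
    A.Q g⁻¹ (A.Q g v) = v := by
  rw [← A.Q_mul_apply, inv_mul_cancel, A.Q_one]
  rfl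

lemma XRep.Q_inv_apply' (A : XRep F X V) (g : X₁) (v : V) :
    A.Q g (A.Q g⁻¹ v) = v := by
  rw [← A.Q_mul_apply, mul_inv_cancel, A.Q_one]
  rfl

lemma braidAux_tmul (PA : X₂ → (V →ₗ[F] V)) (QB : X₁ → (W →ₗ[F] W)) (v : V) (w : W) :
    braidAux X PA QB (v ⊗ₜ[F] w) = ∑ m : X₂, QB (X.δ m) w ⊗ₜ[F] PA m v := by
  simp [braidAux, LinearMap.sum_apply]

lemma tensorP_tmul (A : XRep F X V) (B : XRep F X W) (m : X₂) (v : V) (w : W) :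
    tensorP A B m (v ⊗ₜ[F] w) = ∑ n : X₂, A.P n v ⊗ₜ[F] B.P (n⁻¹ * m) w := by
  simp [tensorP, LinearMap.sum_apply]

lemma tensorQ_tmul (A : XRep F X V) (B : XRep F X W) (g : X₁) (v : V) (w : W) :
    tensorQ A B g (v ⊗ₜ[F] w) = A.Q g v ⊗ₜ[F] B.Q g w := rfl

end MyHelpers

section MyMain
open TensorProduct
set_option linter.unusedSectionVars false

variable {F : Type} [Field F] {X₁ X₂ : Type} [Group X₁] [Group X₂] [Fintype X₁] [Fintype X₂] [DecidableEq X₂]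
variable {X : CrossedModule X₁ X₂}
variable {U V W : Type}
  [AddCommGroup U] [Module F U] [AddCommGroup V] [Module F V] [AddCommGroup W] [Module F W]

lemma tensorP_orth (A : XRep F X V) (B : XRep F X W) (m m' : X₂) :
    tensorP A B m ∘ₗ tensorP A B m' = if m = m' then tensorP A B m else 0 := by
  by_cases hmm : m = m'
  · subst hmm
    rw [if_pos rfl]
    apply TensorProduct.ext'
    intro v w
    simp only [LinearMap.comp_apply, tensorP_tmul, map_sum]
    refine Finset.sum_congr rfl fun n _ => ?_
    have : ∀ p : X₂, A.P p (A.P n v) ⊗ₜ[F] B.P (p⁻¹ * m) (B.P (n⁻¹ * m) w)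
        = if p = n then A.P n v ⊗ₜ[F] B.P (n⁻¹ * m) w else 0 := by
      intro p
      rw [A.P_orth_apply, B.P_orth_apply]
      split_ifs with h1 h2 h2 <;> simp_all [ite_tmul, tmul_ite]
    simp only [this, Finset.sum_ite_eq', Finset.mem_univ, if_pos]
  · rw [if_neg hmm]
    apply TensorProduct.ext'
    intro v w
    simp only [LinearMap.comp_apply, tensorP_tmul, map_sum, LinearMap.zero_apply]
    refine Finset.sum_eq_zero fun n _ => ?_
    refine Finset.sum_eq_zero fun p _ => ?_
    rw [A.P_orth_apply, B.P_orth_apply]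
    split_ifs with h1 h2
    · exact absurd (by rwa [h1, mul_right_inj] at h2) hmm
    all_goals simp

lemma tensorP_total (A : XRep F X V) (B : XRep F X W) :
    (∑ m : X₂, tensorP A B m) = LinearMap.id := by
  apply TensorProduct.ext'
  intro v w
  simp only [LinearMap.sum_apply, tensorP_tmul, LinearMap.id_apply]
  rw [Finset.sum_comm]
  calc ∑ n : X₂, ∑ m : X₂, A.P n v ⊗ₜ[F] B.P (n⁻¹ * m) w
      = ∑ n : X₂, A.P n v ⊗ₜ[F] w := by
        refine Finset.sum_congr rfl fun n _ => ?_
        rw [← tmul_sum]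
        congr 1
        calc ∑ m : X₂, B.P (n⁻¹ * m) w = ∑ m : X₂, B.P m w :=
              Fintype.sum_bijective (fun m => n⁻¹ * m)
                (Group.mulLeft_bijective n⁻¹) _ _ (fun m => rfl)
          _ = w := B.P_total_apply w
    _ = v ⊗ₜ[F] w := by rw [← sum_tmul, A.P_total_apply]

lemma tensorPQ_compat (A : XRep F X V) (B : XRep F X W) (m : X₂) (g : X₁) :
    tensorP A B m ∘ₗ tensorQ A B g = tensorQ A B g ∘ₗ tensorP A B (X.act m g) := by
  apply TensorProduct.ext'
  intro v w
  simp only [LinearMap.comp_apply, tensorQ_tmul, tensorP_tmul, map_sum, A.PQ_apply, B.PQ_apply]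
  refine Fintype.sum_bijective (fun n => X.act n g) (X.act_bijective g) _ _ fun n => ?_
  simp [X.act_hom, X.act_inv]

noncomputable def tensorXRep (A : XRep F X V) (B : XRep F X W) : XRep F X (V ⊗[F] W) where
  P := tensorP A B
  Q := tensorQ A B
  P_orth := tensorP_orth A B
  P_total := tensorP_total A B
  Q_one := by
    ext v w
    simp [tensorQ, A.Q_one, B.Q_one]
  Q_mul := fun g h => by
    ext v w
    simp [tensorQ, A.Q_mul, B.Q_mul]
  PQ_compat := tensorPQ_compat A B

end MyMain

section MyBraid
open TensorProduct
set_option linter.unusedSectionVars false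

variable {F : Type} [Field F] {X₁ X₂ : Type} [Group X₁] [Group X₂] [Fintype X₁] [Fintype X₂] [DecidableEq X₂]
variable {X : CrossedModule X₁ X₂}
variable {U V W U' V' : Type}
  [AddCommGroup U] [Module F U] [AddCommGroup V] [Module F V] [AddCommGroup W] [Module F W]
  [AddCommGroup U'] [Module F U'] [AddCommGroup V'] [Module F V']

lemma braid_tmul (A : XRep F X U) (B : XRep F X V) (u : U) (v : V) :
    braid A B (u ⊗ₜ[F] v) = ∑ m : X₂, B.Q (X.δ m) v ⊗ₜ[F] A.P m u :=
  braidAux_tmul A.P B.Q u v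

lemma braid_tensorP (A : XRep F X U) (B : XRep F X V) (m' : X₂) :
    braid A B ∘ₗ tensorP A B m' = tensorP B A m' ∘ₗ braid A B := by
  apply TensorProduct.ext'
  intro u v
  simp only [LinearMap.comp_apply, tensorP_tmul, braid_tmul, map_sum]
  calc ∑ n : X₂, ∑ m : X₂, B.Q (X.δ m) (B.P (n⁻¹ * m') v) ⊗ₜ[F] A.P m (A.P n u)
      = ∑ n : X₂, B.Q (X.δ n) (B.P (n⁻¹ * m') v) ⊗ₜ[F] A.P n u := by
        refine Finset.sum_congr rfl fun n _ => ?_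
        have : ∀ mm : X₂, B.Q (X.δ mm) (B.P (n⁻¹ * m') v) ⊗ₜ[F] A.P mm (A.P n u)
            = if mm = n then B.Q (X.δ n) (B.P (n⁻¹ * m') v) ⊗ₜ[F] A.P n u else 0 := by
          intro mm
          rw [A.P_orth_apply]
          split_ifs with h <;> simp_all [tmul_ite]
        simp only [this, Finset.sum_ite_eq', Finset.mem_univ, if_pos]
    _ = ∑ m : X₂, ∑ p : X₂, B.P p (B.Q (X.δ m) v) ⊗ₜ[F] A.P (p⁻¹ * m') (A.P m u) := by
        refine Finset.sum_congr rfl fun n _ => ?_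
        have : ∀ p : X₂, B.P p (B.Q (X.δ n) v) ⊗ₜ[F] A.P (p⁻¹ * m') (A.P n u)
            = if p = m' * n⁻¹ then B.P (m' * n⁻¹) (B.Q (X.δ n) v) ⊗ₜ[F] A.P n u else 0 := by
          intro p
          rw [A.P_orth_apply]
          by_cases h : p = m' * n⁻¹
          · subst h
            rw [if_pos rfl, if_pos (by group)]
            congr 2
            group
          · rw [if_neg h, if_neg (by
              intro hc
              apply h
              rw [inv_mul_eq_iff_eq_mul] at hc
              rw [hc]
              group), tmul_zero]
        simp only [this, Finset.sum_ite_eq', Finset.mem_univ, if_pos]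
        rw [B.PQ_apply]
        congr 2
        rw [X.peiffer]
        group

lemma braid_tensorQ (A : XRep F X U) (B : XRep F X V) (g : X₁) :
    braid A B ∘ₗ tensorQ A B g = tensorQ B A g ∘ₗ braid A B := by
  apply TensorProduct.ext'
  intro u v
  simp only [LinearMap.comp_apply, tensorQ_tmul, braid_tmul, map_sum]
  refine Fintype.sum_bijective (fun n => X.act n g) (X.act_bijective g) _ _ fun n => ?_
  rw [← A.QP_apply, ← B.Q_mul_apply, ← B.Q_mul_apply, X.equivariance]
  congr 2
  group

/-- The inverse of the braiding. -/
noncomputable def braidInv (A : XRep F X U) (B : XRep F X V) :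
    (V ⊗[F] U) →ₗ[F] (U ⊗[F] V) :=
  ∑ m : X₂, (TensorProduct.map (A.P m) (B.Q (X.δ m)⁻¹)) ∘ₗ
    (TensorProduct.comm F V U).toLinearMap

lemma braidInv_tmul (A : XRep F X U) (B : XRep F X V) (v : V) (u : U) :
    braidInv A B (v ⊗ₜ[F] u) = ∑ m : X₂, A.P m u ⊗ₜ[F] B.Q (X.δ m)⁻¹ v := by
  simp [braidInv, LinearMap.sum_apply]

lemma braidInv_braid (A : XRep F X U) (B : XRep F X V) (t : U ⊗[F] V) :
    braidInv A B (braid A B t) = t := by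
  have h : braidInv A B ∘ₗ braid A B = LinearMap.id := by
    apply TensorProduct.ext'
    intro u v
    simp only [LinearMap.comp_apply, braid_tmul, map_sum, braidInv_tmul, LinearMap.id_apply]
    calc ∑ m : X₂, ∑ p : X₂, A.P p (A.P m u) ⊗ₜ[F] B.Q (X.δ p)⁻¹ (B.Q (X.δ m) v)
        = ∑ m : X₂, A.P m u ⊗ₜ[F] v := by
          refine Finset.sum_congr rfl fun m _ => ?_
          have : ∀ p : X₂, A.P p (A.P m u) ⊗ₜ[F] B.Q (X.δ p)⁻¹ (B.Q (X.δ m) v)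
              = if p = m then A.P m u ⊗ₜ[F] v else 0 := by
            intro p
            rw [A.P_orth_apply]
            split_ifs with h
            · subst h; rw [B.Q_inv_apply]
            · simp
          simp only [this, Finset.sum_ite_eq', Finset.mem_univ, if_pos]
      _ = u ⊗ₜ[F] v := by rw [← sum_tmul, A.P_total_apply]
  exact LinearMap.congr_fun h t

lemma braid_braidInv (A : XRep F X U) (B : XRep F X V) (t : V ⊗[F] U) :
    braid A B (braidInv A B t) = t := by
  have h : braid A B ∘ₗ braidInv A B = LinearMap.id := by
    apply TensorProduct.ext'
    intro v u
    simp only [LinearMap.comp_apply, braidInv_tmul, map_sum, braid_tmul, LinearMap.id_apply]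
    calc ∑ m : X₂, ∑ p : X₂, B.Q (X.δ p) (B.Q (X.δ m)⁻¹ v) ⊗ₜ[F] A.P p (A.P m u)
        = ∑ m : X₂, v ⊗ₜ[F] A.P m u := by
          refine Finset.sum_congr rfl fun m _ => ?_
          have : ∀ p : X₂, B.Q (X.δ p) (B.Q (X.δ m)⁻¹ v) ⊗ₜ[F] A.P p (A.P m u)
              = if p = m then v ⊗ₜ[F] A.P m u else 0 := by
            intro p
            rw [A.P_orth_apply]
            split_ifs with h
            · subst h; rw [B.Q_inv_apply']
            · simp
          simp only [this, Finset.sum_ite_eq', Finset.mem_univ, if_pos]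
      _ = v ⊗ₜ[F] u := by rw [← tmul_sum, A.P_total_apply]
  exact LinearMap.congr_fun h t

lemma braid_bijective (A : XRep F X U) (B : XRep F X V) :
    Function.Bijective (braid A B) :=
  Function.bijective_iff_has_inverse.mpr
    ⟨braidInv A B, braidInv_braid A B, braid_braidInv A B⟩

lemma braid_natural (A : XRep F X U) (B : XRep F X V) (A' : XRep F X U') (B' : XRep F X V')
    (f : U →ₗ[F] U') (h : V →ₗ[F] V')
    (hf : IsXRepHom A A' f) (hh : IsXRepHom B B' h) :
    braid A' B' ∘ₗ TensorProduct.map f h = TensorProduct.map h f ∘ₗ braid A B := by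
  apply TensorProduct.ext'
  intro u v
  simp only [LinearMap.comp_apply, map_tmul, braid_tmul, map_sum]
  refine Finset.sum_congr rfl fun m _ => ?_
  have h1 := LinearMap.congr_fun (hf.1 m) u
  have h2 := LinearMap.congr_fun (hh.2 (X.δ m)) v
  simp only [LinearMap.comp_apply] at h1 h2
  rw [← h1, ← h2]

section MyHex
open TensorProduct
set_option linter.unusedSectionVars false

variable {F : Type} [Field F] {X₁ X₂ : Type} [Group X₁] [Group X₂] [Fintype X₁] [Fintype X₂] [DecidableEq X₂]
variable {X : CrossedModule X₁ X₂}
variable {U V W : Type}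
  [AddCommGroup U] [Module F U] [AddCommGroup V] [Module F V] [AddCommGroup W] [Module F W]

lemma hexagon1 (A : XRep F X U) (B : XRep F X V) (C : XRep F X W) :
    braidAux X A.P (tensorQ B C) =
      (TensorProduct.assoc F V W U).symm.toLinearMap ∘ₗ
      TensorProduct.map (LinearMap.id : V →ₗ[F] V) (braidAux X A.P C.Q) ∘ₗ
      (TensorProduct.assoc F V U W).toLinearMap ∘ₗ
      TensorProduct.map (braidAux X A.P B.Q) (LinearMap.id : W →ₗ[F] W) ∘ₗ
      (TensorProduct.assoc F U V W).symm.toLinearMap := by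
  apply TensorProduct.ext'
  intro u t
  induction t with
  | zero => simp
  | tmul v w =>
    simp only [LinearMap.comp_apply, LinearEquiv.coe_coe, assoc_symm_tmul, map_tmul,
      braidAux_tmul, LinearMap.id_coe, id_eq, sum_tmul, map_sum, assoc_tmul, tmul_sum,
      assoc_symm_tmul]
    refine Finset.sum_congr rfl fun m _ => ?_
    rw [tensorQ_tmul]
    have : ∀ p : X₂, ((B.Q (X.δ m)) v ⊗ₜ[F] (C.Q (X.δ p)) w) ⊗ₜ[F] (A.P p) ((A.P m) u)
        = if p = m then (B.Q (X.δ m) v ⊗ₜ[F] C.Q (X.δ m) w) ⊗ₜ[F] A.P m u else 0 := by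
      intro p
      rw [A.P_orth_apply]
      split_ifs with h
      · subst h; rfl
      · simp
    simp only [this, Finset.sum_ite_eq', Finset.mem_univ, if_pos]
  | add x y hx hy => simp only [tmul_add, map_add, hx, hy]

lemma hexagon2 (A : XRep F X U) (B : XRep F X V) (C : XRep F X W) :
    braidAux X (tensorP A B) C.Q =
      (TensorProduct.assoc F W U V).toLinearMap ∘ₗ
      TensorProduct.map (braidAux X A.P C.Q) (LinearMap.id : V →ₗ[F] V) ∘ₗ
      (TensorProduct.assoc F U W V).symm.toLinearMap ∘ₗ
      TensorProduct.map (LinearMap.id : U →ₗ[F] U) (braidAux X B.P C.Q) ∘ₗ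
      (TensorProduct.assoc F U V W).toLinearMap := by
  apply TensorProduct.ext_threefold
  intro u v w
  simp only [LinearMap.comp_apply, LinearEquiv.coe_coe, assoc_tmul, map_tmul,
    braidAux_tmul, LinearMap.id_coe, id_eq, tmul_sum, map_sum, assoc_symm_tmul,
    sum_tmul, assoc_tmul, tensorP_tmul]
  calc ∑ m : X₂, ∑ n : X₂, (C.Q (X.δ m)) w ⊗ₜ[F] ((A.P n) u ⊗ₜ[F] (B.P (n⁻¹ * m)) v)
      = ∑ n : X₂, ∑ m : X₂, (C.Q (X.δ m)) w ⊗ₜ[F] ((A.P n) u ⊗ₜ[F] (B.P (n⁻¹ * m)) v) :=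
        Finset.sum_comm
    _ = ∑ n : X₂, ∑ l : X₂, (C.Q (X.δ n)) ((C.Q (X.δ l)) w) ⊗ₜ[F] ((A.P n) u ⊗ₜ[F] (B.P l) v) := by
        refine Finset.sum_congr rfl fun n _ =>
          Fintype.sum_bijective (fun m => n⁻¹ * m) (Group.mulLeft_bijective n⁻¹) _ _ fun m => ?_
        rw [← C.Q_mul_apply, ← map_mul, mul_inv_cancel_left]
    _ = ∑ l : X₂, ∑ n : X₂, (C.Q (X.δ n)) ((C.Q (X.δ l)) w) ⊗ₜ[F] ((A.P n) u ⊗ₜ[F] (B.P l) v) :=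
        Finset.sum_comm

end MyHex

section MyKer
open TensorProduct
set_option linter.unusedSectionVars false

variable {F : Type} [Field F] {X₁ X₂ : Type} [Group X₁] [Group X₂] [Fintype X₁] [Fintype X₂] [DecidableEq X₂]
variable {X : CrossedModule X₁ X₂}
variable {U V : Type}
  [AddCommGroup U] [Module F U] [AddCommGroup V] [Module F V]

lemma ker_xrep (A : XRep F X U) (B : XRep F X V) (f : U →ₗ[F] V) (hf : IsXRepHom A B f) :
    ∃ K : XRep F X (LinearMap.ker f), IsXRepHom K A (LinearMap.ker f).subtype := by
  have hP : ∀ m : X₂, ∀ x ∈ LinearMap.ker f, A.P m x ∈ LinearMap.ker f := by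
    intro m x hx
    have h := LinearMap.congr_fun (hf.1 m) x
    simp only [LinearMap.comp_apply] at h
    simp only [LinearMap.mem_ker] at hx ⊢
    rw [h, hx, map_zero]
  have hQ : ∀ g : X₁, ∀ x ∈ LinearMap.ker f, A.Q g x ∈ LinearMap.ker f := by
    intro g x hx
    have h := LinearMap.congr_fun (hf.2 g) x
    simp only [LinearMap.comp_apply] at h
    simp only [LinearMap.mem_ker] at hx ⊢
    rw [h, hx, map_zero]
  refine ⟨{
    P := fun m => (A.P m).restrict (hP m)
    Q := fun g => (A.Q g).restrict (hQ g)
    P_orth := fun m n => by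
      ext x
      have h := A.P_orth_apply m n (x : U)
      split_ifs with hc
      · rw [if_pos hc] at h
        simpa [LinearMap.restrict_coe_apply, LinearMap.comp_apply] using h
      · rw [if_neg hc] at h
        simpa [LinearMap.restrict_coe_apply, LinearMap.comp_apply] using h
    P_total := by
      ext x
      simp only [LinearMap.sum_apply, LinearMap.id_apply, Submodule.coe_sum,
        LinearMap.restrict_coe_apply]
      exact A.P_total_apply (x : U)
    Q_one := by
      ext x
      simp only [LinearMap.restrict_coe_apply, A.Q_one, LinearMap.id_apply]
    Q_mul := fun g h => by
      ext x
      simp only [LinearMap.restrict_coe_apply, LinearMap.comp_apply]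
      exact A.Q_mul_apply g h (x : U)
    PQ_compat := fun m g => by
      ext x
      simp only [LinearMap.restrict_coe_apply, LinearMap.comp_apply]
      exact A.PQ_apply m g (x : U)
  }, fun m => by
      ext x
      simp only [LinearMap.comp_apply, Submodule.subtype_apply, LinearMap.restrict_coe_apply],
    fun g => by
      ext x
      simp only [LinearMap.comp_apply, Submodule.subtype_apply, LinearMap.restrict_coe_apply]⟩

end MyKer


open TensorProduct in
/-- The category `M(X)` of representations of a finite crossed module `X` is a
`k`-linear abelian category (morphism spaces are linear subspaces and kernels of
morphisms are again objects), the tensor product `(V ⊗ W)_m = ⊕_{nl=m} V_n ⊗ W_l`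
with diagonal `X₁`-action makes it a tensor category (the tensor product of two
objects is again an object), and the maps
`R_{V,W}(v ⊗ w) = ∑_{m ∈ X₂} Q_W(∂m) w ⊗ P_V(m) v` define a braiding:
each `R_{V,W}` is an isomorphism in `M(X)`, natural in both arguments, and the
two hexagon identities hold. -/
theorem MX_braided_category {F : Type} [Field F] [IsAlgClosed F] [CharZero F]
    {X₁ X₂ : Type} [Group X₁] [Group X₂] [Fintype X₁] [Fintype X₂] [DecidableEq X₂]
    {X : CrossedModule X₁ X₂}
    {U V W U' V' : Type}
    [AddCommGroup U] [Module F U] [FiniteDimensional F U]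
    [AddCommGroup V] [Module F V] [FiniteDimensional F V]
    [AddCommGroup W] [Module F W] [FiniteDimensional F W]
    [AddCommGroup U'] [Module F U'] [FiniteDimensional F U']
    [AddCommGroup V'] [Module F V'] [FiniteDimensional F V']
    (A : XRep F X U) (B : XRep F X V) (C : XRep F X W) :
    -- `M(X)` is `F`-linear: morphism spaces are linear subspaces
    (IsXRepHom A B (0 : U →ₗ[F] V) ∧
      (∀ f g : U →ₗ[F] V, IsXRepHom A B f → IsXRepHom A B g → IsXRepHom A B (f + g)) ∧
      (∀ (c : F) (f : U →ₗ[F] V), IsXRepHom A B f → IsXRepHom A B (c • f))) ∧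
    -- kernels of morphisms exist (towards abelianness)
    (∀ f : U →ₗ[F] V, IsXRepHom A B f →
      ∃ K : XRep F X (LinearMap.ker f), IsXRepHom K A (LinearMap.ker f).subtype) ∧
    -- the tensor product of two objects is again an object of `M(X)`
    (∃ T : XRep F X (U ⊗[F] V), T.P = tensorP A B ∧ T.Q = tensorQ A B) ∧
    -- `R_{U,V}` is a morphism in `M(X)` …
    (∀ m : X₂, braid A B ∘ₗ tensorP A B m = tensorP B A m ∘ₗ braid A B) ∧
    (∀ g : X₁, braid A B ∘ₗ tensorQ A B g = tensorQ B A g ∘ₗ braid A B) ∧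
    -- … and an isomorphism
    Function.Bijective (braid A B) ∧
    -- naturality of the braiding
    (∀ (A' : XRep F X U') (B' : XRep F X V') (f : U →ₗ[F] U') (h : V →ₗ[F] V'),
      IsXRepHom A A' f → IsXRepHom B B' h →
      braid A' B' ∘ₗ TensorProduct.map f h = TensorProduct.map h f ∘ₗ braid A B) ∧
    -- hexagon identity for `R_{U, V ⊗ W}`
    (braidAux X A.P (tensorQ B C) =
      (TensorProduct.assoc F V W U).symm.toLinearMap ∘ₗ
      TensorProduct.map (LinearMap.id : V →ₗ[F] V) (braidAux X A.P C.Q) ∘ₗ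
      (TensorProduct.assoc F V U W).toLinearMap ∘ₗ
      TensorProduct.map (braidAux X A.P B.Q) (LinearMap.id : W →ₗ[F] W) ∘ₗ
      (TensorProduct.assoc F U V W).symm.toLinearMap) ∧
    -- hexagon identity for `R_{U ⊗ V, W}`
    (braidAux X (tensorP A B) C.Q =
      (TensorProduct.assoc F W U V).toLinearMap ∘ₗ
      TensorProduct.map (braidAux X A.P C.Q) (LinearMap.id : V →ₗ[F] V) ∘ₗ
      (TensorProduct.assoc F U W V).symm.toLinearMap ∘ₗ
      TensorProduct.map (LinearMap.id : U →ₗ[F] U) (braidAux X B.P C.Q) ∘ₗ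
      (TensorProduct.assoc F U V W).toLinearMap) := by
  refine ⟨⟨⟨fun m => by simp, fun g => by simp⟩,
    fun f g hf hg => ⟨fun m => by rw [LinearMap.add_comp, LinearMap.comp_add, hf.1 m, hg.1 m],
      fun gg => by rw [LinearMap.add_comp, LinearMap.comp_add, hf.2 gg, hg.2 gg]⟩,
    fun c f hf => ⟨fun m => by rw [LinearMap.smul_comp, LinearMap.comp_smul, hf.1 m],
      fun gg => by rw [LinearMap.smul_comp, LinearMap.comp_smul, hf.2 gg]⟩⟩,
    fun f hf => ker_xrep A B f hf,
    ⟨tensorXRep A B, rfl, rfl⟩,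
    braid_tensorP A B,
    braid_tensorQ A B,
    braid_bijective A B,
    fun A' B' f h hf hh => braid_natural A B A' B' f h hf hh,
    hexagon1 A B C,
    hexagon2 A B C⟩
end MyBraid
end

section
/- The vacuum object V_K = k[ker ∂] ⊗ k(coker ∂) with P(m)(x ⊗ δ_{Iy}) = δ(m^y, x)(x ⊗ δ_{Iy}) and Q(g)(x ⊗ δ_{Iy}) = x ⊗ δ_{Igy} is a well-defined object of the category M(X) of crossed-module representations; i.e., the grading projections and X₁-action satisfy P(m)Q(g) = Q(g)P(m^g). -/
section Vacuum

variable (F : Type) [Field F] {X₁ X₂ : Type} [Group X₁] [Group X₂]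
  [Fintype X₁] [Fintype X₂] [DecidableEq X₂]
  (X : CrossedModule X₁ X₂) [X.δ.range.Normal]

/-- The underlying vector space `k[ker ∂] ⊗ k(coker ∂)` of the vacuum object,
realized as the space of `F`-valued functions on `(ker ∂) × (coker ∂)`;
the basis vector `x ⊗ δ_{Iy}` corresponds to the indicator function of `(x, Iy)`. -/
abbrev VacuumCarrier : Type := (X.δ.ker × (X₁ ⧸ X.δ.range)) → F

/-- The grading projections of the vacuum object,
`P(m)(x ⊗ δ_{Iy}) = δ(m^y, x) (x ⊗ δ_{Iy})`, defined via a choice of coset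
representative. -/
noncomputable def vacuumP (m : X₂) : VacuumCarrier F X →ₗ[F] VacuumCarrier F X where
  toFun f := fun p => if X.act m (Quotient.out p.2) = (p.1 : X₂) then f p else 0
  map_add' f g := by funext p; by_cases h : X.act m (Quotient.out p.2) = (p.1 : X₂) <;> simp [h]
  map_smul' c f := by funext p; by_cases h : X.act m (Quotient.out p.2) = (p.1 : X₂) <;> simp [h]

/-- The `X₁`-action of the vacuum object, `Q(g)(x ⊗ δ_{Iy}) = x ⊗ δ_{Igy}`. -/
def vacuumQ (g : X₁) : VacuumCarrier F X →ₗ[F] VacuumCarrier F X where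
  toFun f := fun p => f (p.1, (QuotientGroup.mk g)⁻¹ * p.2)
  map_add' f g := by funext p; simp
  map_smul' c f := by funext p; simp

end Vacuum

section Aux

variable {X₁ X₂ : Type} [Group X₁] [Group X₂]

/-- Elements of the kernel of `∂` are central in `X₂`. -/
lemma ker_central (X : CrossedModule X₁ X₂) {x : X₂} (hx : X.δ x = 1) (a : X₂) :
    x * a = a * x := by
  have h := X.peiffer a x
  rw [hx, X.act_one] at h
  calc x * a = x * (x⁻¹ * a * x) := by rw [← h]
    _ = a * x := by group

/-- The condition `m^y = x` only depends on the coset of `y`, for `x ∈ ker ∂`. -/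
lemma cond_coset_indep (X : CrossedModule X₁ X₂) [X.δ.range.Normal]
    {y y' : X₁} (h : (QuotientGroup.mk y : X₁ ⧸ X.δ.range) = QuotientGroup.mk y')
    {x : X₂} (hx : X.δ x = 1) (m : X₂) :
    X.act m y = x ↔ X.act m y' = x := by
  rw [QuotientGroup.eq] at h
  obtain ⟨n, hn⟩ := h
  have hy' : y' = y * X.δ n := by rw [hn]; group
  rw [hy', X.act_mul, X.peiffer]
  constructor
  · intro he
    rw [he, mul_assoc, ker_central X hx n, ← mul_assoc, inv_mul_cancel, one_mul]
  · intro he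
    have h2 : X.act m y = n * x * n⁻¹ := by
      rw [← he]; group
    rw [h2, ← ker_central X hx n, mul_assoc, mul_inv_cancel, mul_one]

lemma act_inj (X : CrossedModule X₁ X₂) (y : X₁) {m n : X₂}
    (h : X.act m y = X.act n y) : m = n := by
  have := congrArg (fun z => X.act z y⁻¹) h
  simpa [← X.act_mul, X.act_one] using this

end Aux

/-- The vacuum object `V_K = k[ker ∂] ⊗ k(coker ∂)` with
`P(m)(x ⊗ δ_{Iy}) = δ(m^y, x)(x ⊗ δ_{Iy})` and `Q(g)(x ⊗ δ_{Iy}) = x ⊗ δ_{Igy}`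
is a well-defined object of `M(X)`: the formula for `P` is independent of the
chosen coset representative `y`, `P` is a complete family of orthogonal
projections, `Q` is an action of `X₁`, and `P(m)Q(g) = Q(g)P(m^g)`. -/
theorem vacuum_is_object {F : Type} [Field F] [IsAlgClosed F] [CharZero F]
    {X₁ X₂ : Type} [Group X₁] [Group X₂] [Fintype X₁] [Fintype X₂] [DecidableEq X₂]
    (X : CrossedModule X₁ X₂) [X.δ.range.Normal] :
    -- well-definedness: the grading can be computed with any coset representative
    (∀ (m : X₂) (f : VacuumCarrier F X) (x : X.δ.ker) (y : X₁),
      vacuumP F X m f (x, QuotientGroup.mk y) =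
        if X.act m y = (x : X₂) then f (x, QuotientGroup.mk y) else 0) ∧
    (∀ (g : X₁) (f : VacuumCarrier F X) (x : X.δ.ker) (y : X₁),
      vacuumQ F X g f (x, QuotientGroup.mk y) = f (x, QuotientGroup.mk (g⁻¹ * y))) ∧
    -- the data defines an object of `M(X)`
    (∀ m n : X₂, vacuumP F X m ∘ₗ vacuumP F X n = if m = n then vacuumP F X m else 0) ∧
    ((∑ m : X₂, vacuumP F X m) = LinearMap.id) ∧
    (vacuumQ F X 1 = LinearMap.id) ∧
    (∀ g h : X₁, vacuumQ F X (g * h) = vacuumQ F X g ∘ₗ vacuumQ F X h) ∧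
    (∀ (m : X₂) (g : X₁),
      vacuumP F X m ∘ₗ vacuumQ F X g = vacuumQ F X g ∘ₗ vacuumP F X (X.act m g)) := by
  have out_mk : ∀ c : X₁ ⧸ X.δ.range,
      (QuotientGroup.mk (Quotient.out c) : X₁ ⧸ X.δ.range) = c := fun c => Quotient.out_eq c
  refine ⟨?_, ?_, ?_, ?_, ?_, ?_, ?_⟩
  · intro m f x y
    show (if X.act m (Quotient.out (QuotientGroup.mk y : X₁ ⧸ X.δ.range)) = (x : X₂)
        then f (x, QuotientGroup.mk y) else 0) = _
    exact if_congr (cond_coset_indep X (out_mk (QuotientGroup.mk y)) x.2 m) rfl rfl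
  · intro g f x y
    show f (x, (QuotientGroup.mk g)⁻¹ * QuotientGroup.mk y) = _
    rw [show ((QuotientGroup.mk g)⁻¹ * QuotientGroup.mk y : X₁ ⧸ X.δ.range)
        = QuotientGroup.mk (g⁻¹ * y) by simp [QuotientGroup.mk_mul, QuotientGroup.mk_inv]]
  · intro m n
    by_cases h : m = n
    · subst h
      simp only [if_pos rfl]
      ext f p
      show (if X.act m (Quotient.out p.2) = (p.1 : X₂) then
          (if X.act m (Quotient.out p.2) = (p.1 : X₂) then f p else 0) else 0) = _
      by_cases hc : X.act m (Quotient.out p.2) = (p.1 : X₂) <;> simp [hc, vacuumP]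
    · simp only [if_neg h]
      ext f p
      show (if X.act m (Quotient.out p.2) = (p.1 : X₂) then
          (if X.act n (Quotient.out p.2) = (p.1 : X₂) then f p else 0) else 0) = 0
      by_cases hm : X.act m (Quotient.out p.2) = (p.1 : X₂)
      · by_cases hn : X.act n (Quotient.out p.2) = (p.1 : X₂)
        · exact absurd (act_inj X _ (hm.trans hn.symm)) h
        · simp [hm, hn]
      · simp [hm]
  · ext f p
    rw [LinearMap.sum_apply]
    show (∑ m : X₂, vacuumP F X m f) p = f p
    rw [Finset.sum_apply]
    have hiff : ∀ m : X₂, (X.act m (Quotient.out p.2) = (p.1 : X₂)) ↔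
        m = X.act (p.1 : X₂) (Quotient.out p.2)⁻¹ := by
      intro m
      constructor
      · intro h
        rw [← h, ← X.act_mul, mul_inv_cancel, X.act_one]
      · intro h
        rw [h, ← X.act_mul, inv_mul_cancel, X.act_one]
    calc (∑ m : X₂, vacuumP F X m f p)
        = ∑ m : X₂, (if m = X.act (p.1 : X₂) (Quotient.out p.2)⁻¹ then f p else 0) := by
          apply Finset.sum_congr rfl
          intro m _
          show (if X.act m (Quotient.out p.2) = (p.1 : X₂) then f p else 0) = _
          exact if_congr (hiff m) rfl rfl
      _ = f p := by rw [Finset.sum_ite_eq' Finset.univ]; simp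
  · ext f p
    show f (p.1, (QuotientGroup.mk 1)⁻¹ * p.2) = f p
    simp
  · intro g h
    ext f p
    show f (p.1, (QuotientGroup.mk (g * h))⁻¹ * p.2)
        = f (p.1, (QuotientGroup.mk h)⁻¹ * ((QuotientGroup.mk g)⁻¹ * p.2))
    rw [QuotientGroup.mk_mul, mul_inv_rev, mul_assoc]
  · intro m g
    ext f p
    show (if X.act m (Quotient.out p.2) = (p.1 : X₂)
        then f (p.1, (QuotientGroup.mk g)⁻¹ * p.2) else 0)
      = (if X.act (X.act m g) (Quotient.out ((QuotientGroup.mk g)⁻¹ * p.2)) = (p.1 : X₂)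
        then f (p.1, (QuotientGroup.mk g)⁻¹ * p.2) else 0)
    have hcos : (QuotientGroup.mk (Quotient.out p.2) : X₁ ⧸ X.δ.range)
        = QuotientGroup.mk (g * Quotient.out ((QuotientGroup.mk g)⁻¹ * p.2)) := by
      rw [QuotientGroup.mk_mul, out_mk, out_mk]
      group
    exact if_congr ((cond_coset_indep X hcos p.1.2 m).trans (by rw [X.act_mul])) rfl rfl
end

section
/- The vacuum object V_K of M(X) is transparent: for every object W of M(X), the braiding satisfies R_{W,V_K} ∘ R_{V_K,W} = id. -/
/-- The vacuum object `V_K` of `M(X)` is transparent: for every object `W` of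
`M(X)`, the braiding satisfies `R_{W,V_K} ∘ R_{V_K,W} = id`. -/
theorem vacuum_transparent {F : Type} [Field F] [IsAlgClosed F] [CharZero F]
    {X₁ X₂ : Type} [Group X₁] [Group X₂] [Fintype X₁] [Fintype X₂] [DecidableEq X₂]
    (X : CrossedModule X₁ X₂) [X.δ.range.Normal]
    {W : Type} [AddCommGroup W] [Module F W] [FiniteDimensional F W]
    (B : XRep F X W) :
    braidAux X B.P (vacuumQ F X) ∘ₗ braidAux X (vacuumP F X) B.Q =
      LinearMap.id := by
  classical
  have sumComp : ∀ {M N P : Type} [AddCommGroup M] [Module F M] [AddCommGroup N]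
      [Module F N] [AddCommGroup P] [Module F P] (f : X₂ → (N →ₗ[F] P)) (g : M →ₗ[F] N),
      (∑ m : X₂, f m) ∘ₗ g = ∑ m : X₂, f m ∘ₗ g := by
    intro M N P _ _ _ _ _ _ f g
    refine LinearMap.ext fun x => ?_
    simp [LinearMap.sum_apply]
  -- `vacuumP m = 0` unless `δ m = 1`
  have hP0 : ∀ m : X₂, X.δ m ≠ 1 → vacuumP F X m = 0 := by
    intro m hm
    refine LinearMap.ext fun f => ?_
    funext p
    simp only [vacuumP, LinearMap.coe_mk, AddHom.coe_mk, LinearMap.zero_apply,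
      Pi.zero_apply]
    rw [if_neg]
    intro h
    apply hm
    have h1 : X.δ (X.act m (Quotient.out p.2)) = 1 := by
      rw [h]; exact p.1.2
    rw [X.equivariance] at h1
    have h2 := congrArg (fun z => (Quotient.out p.2) * z * (Quotient.out p.2)⁻¹) h1
    simpa [mul_assoc] using h2
  -- the sum of the vacuum projections is the identity
  have hSumP : (∑ m : X₂, vacuumP F X m) = LinearMap.id := by
    refine LinearMap.ext fun f => ?_
    funext p
    rw [LinearMap.sum_apply, LinearMap.id_apply, Finset.sum_apply]
    simp only [vacuumP, LinearMap.coe_mk, AddHom.coe_mk]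
    have key : ∀ m : X₂,
        (X.act m (Quotient.out p.2) = (p.1 : X₂)) ↔
          m = X.act (p.1 : X₂) (Quotient.out p.2)⁻¹ := by
      intro m
      constructor
      · intro h
        rw [← h, ← X.act_mul, mul_inv_cancel, X.act_one]
      · intro h
        rw [h, ← X.act_mul, inv_mul_cancel, X.act_one]
    calc (∑ m : X₂, if X.act m (Quotient.out p.2) = (p.1 : X₂) then f p else 0)
        = ∑ m : X₂, if m = X.act (p.1 : X₂) (Quotient.out p.2)⁻¹ then f p else 0 := by
          refine Finset.sum_congr rfl fun m _ => ?_
          simp [key m]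
      _ = f p := by rw [Finset.sum_ite_eq' Finset.univ]; simp
  -- `vacuumQ` is trivial on the image of `δ`
  have hQ1 : ∀ n : X₂, vacuumQ F X (X.δ n) = LinearMap.id := by
    intro n
    refine LinearMap.ext fun f => ?_
    funext p
    simp only [vacuumQ, LinearMap.coe_mk, AddHom.coe_mk, LinearMap.id_apply]
    have : (QuotientGroup.mk (X.δ n) : X₁ ⧸ X.δ.range) = 1 := by
      rw [QuotientGroup.eq_one_iff]
      exact ⟨n, rfl⟩
    rw [this]
    simp
  -- first braiding is the flip
  have h1 : braidAux X (vacuumP F X) B.Q =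
      (TensorProduct.comm F (VacuumCarrier F X) W).toLinearMap := by
    unfold braidAux
    rw [← sumComp]
    have hsum : (∑ m : X₂, TensorProduct.map (B.Q (X.δ m)) (vacuumP F X m)) =
        LinearMap.id := by
      have step : ∀ m : X₂, TensorProduct.map (B.Q (X.δ m)) (vacuumP F X m) =
          TensorProduct.map LinearMap.id (vacuumP F X m) := by
        intro m
        by_cases hm : X.δ m = 1
        · rw [hm, B.Q_one]
        · rw [hP0 m hm]
          apply TensorProduct.ext'
          intro w v
          simp
      rw [Finset.sum_congr rfl fun m _ => step m]
      apply TensorProduct.ext'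
      intro w v
      rw [LinearMap.sum_apply]
      simp only [TensorProduct.map_tmul, LinearMap.id_apply, LinearMap.id_coe, id_eq]
      rw [← TensorProduct.tmul_sum]
      congr 1
      rw [← LinearMap.sum_apply, hSumP, LinearMap.id_apply]
    rw [hsum, LinearMap.id_comp]
  -- second braiding is the flip
  have h2 : braidAux X B.P (vacuumQ F X) =
      (TensorProduct.comm F W (VacuumCarrier F X)).toLinearMap := by
    unfold braidAux
    rw [← sumComp]
    have hsum : (∑ n : X₂, TensorProduct.map (vacuumQ F X (X.δ n)) (B.P n)) =
        LinearMap.id := by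
      have step : ∀ n : X₂, TensorProduct.map (vacuumQ F X (X.δ n)) (B.P n) =
          TensorProduct.map LinearMap.id (B.P n) := by
        intro n; rw [hQ1 n]
      rw [Finset.sum_congr rfl fun n _ => step n]
      apply TensorProduct.ext'
      intro v w
      rw [LinearMap.sum_apply]
      simp only [TensorProduct.map_tmul, LinearMap.id_apply, LinearMap.id_coe, id_eq]
      rw [← TensorProduct.tmul_sum]
      congr 1
      rw [← LinearMap.sum_apply, B.P_total, LinearMap.id_apply]
    rw [hsum, LinearMap.id_comp]
  rw [h1, h2]
  apply TensorProduct.ext'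
  intro v w
  simp
end

section
/- In the braided category M(X) of representations of a finite crossed module X, every simple object p that is a direct summand of the vacuum object V_K satisfies S_{pq} = d_p · S_{1q} for all simple q, where d_p is the dimension of p; i.e., its row of the S-matrix is collinear with that of the tensor unit. -/
section Simple

variable {F : Type} [Field F] {X₁ X₂ : Type} [Group X₁] [Group X₂]
  [Fintype X₁] [Fintype X₂] [DecidableEq X₂] {X : CrossedModule X₁ X₂}
  {V : Type} [AddCommGroup V] [Module F V]

/-- A representation of a crossed module is simple if it is nonzero and has no
nontrivial invariant subspace. -/
def XRep.IsSimple (A : XRep F X V) : Prop :=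
  Nontrivial V ∧
  ∀ S : Submodule F V,
    (∀ m : X₂, S.map (A.P m) ≤ S) → (∀ g : X₁, S.map (A.Q g) ≤ S) →
    S = ⊥ ∨ S = ⊤

/-- `A` is a direct summand (retract) of the vacuum object `V_K`. -/
def IsVacuumSummand [X.δ.range.Normal] (A : XRep F X V) : Prop :=
  ∃ (ι : V →ₗ[F] VacuumCarrier F X) (π : VacuumCarrier F X →ₗ[F] V),
    (∀ m : X₂, ι ∘ₗ A.P m = vacuumP F X m ∘ₗ ι) ∧
    (∀ g : X₁, ι ∘ₗ A.Q g = vacuumQ F X g ∘ₗ ι) ∧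
    (∀ m : X₂, π ∘ₗ vacuumP F X m = A.P m ∘ₗ π) ∧
    (∀ g : X₁, π ∘ₗ vacuumQ F X g = A.Q g ∘ₗ π) ∧
    π ∘ₗ ι = LinearMap.id

end Simple

section AuxVac

variable {F : Type} [Field F] {X₁ X₂ : Type} [Group X₁] [Group X₂]
  [Fintype X₁] [Fintype X₂] [DecidableEq X₂] {X : CrossedModule X₁ X₂}

lemma vacuumP_eq_zero [X.δ.range.Normal] {m : X₂} (hm : X.δ m ≠ 1) :
    vacuumP F X m = 0 := by
  have hcond : ∀ p : X.δ.ker × (X₁ ⧸ X.δ.range),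
      X.act m (Quotient.out p.2) ≠ (p.1 : X₂) := by
    intro p h
    apply hm
    have h1 : X.δ (X.act m (Quotient.out p.2)) = 1 := by
      rw [h]; exact p.1.2
    rw [X.equivariance] at h1
    have := congrArg (fun x => (Quotient.out p.2) * x * (Quotient.out p.2)⁻¹) h1
    simpa [mul_assoc] using this
  ext f p
  simp [vacuumP, hcond p]

lemma vacuumQ_delta [X.δ.range.Normal] (n : X₂) :
    vacuumQ F X (X.δ n) = LinearMap.id := by
  have h1 : (QuotientGroup.mk (X.δ n) : X₁ ⧸ X.δ.range) = 1 :=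
    (QuotientGroup.eq_one_iff _).mpr ⟨n, rfl⟩
  ext f p
  simp [vacuumQ, h1]

end AuxVac

/-- Every simple object `p` of `M(X)` that is a direct summand of the vacuum object
`V_K` has its `S`-matrix row collinear with that of the tensor unit:
`S_{pq} = d_p · S_{1q}` for all simple `q`; equivalently, since
`S_{pq} = tr(R_{qp} ∘ R_{pq})/|X|` and `S_{1q} = d_q/|X|`, the unnormalized
`S`-matrix entry equals `d_p · d_q`. -/

theorem vacuum_summand_S_row {F : Type} [Field F] [IsAlgClosed F] [CharZero F]
    {X₁ X₂ : Type} [Group X₁] [Group X₂] [Fintype X₁] [Fintype X₂] [DecidableEq X₂]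
    {X : CrossedModule X₁ X₂} [X.δ.range.Normal]
    {V : Type} [AddCommGroup V] [Module F V] [FiniteDimensional F V]
    (A : XRep F X V) (hA : A.IsSimple) (hsum : IsVacuumSummand A)
    {W : Type} [AddCommGroup W] [Module F W] [FiniteDimensional F W]
    (B : XRep F X W) (hB : B.IsSimple) :
    LinearMap.trace F (TensorProduct F V W)
        (braidAux X B.P A.Q ∘ₗ braidAux X A.P B.Q) =
      (Module.finrank F V : F) * (Module.finrank F W : F) := by
  obtain ⟨ι, π, hιP, hιQ, hπP, hπQ, hπι⟩ := hsum
  have hP0 : ∀ m : X₂, X.δ m ≠ 1 → A.P m = 0 := by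
    intro m hm
    calc A.P m = π ∘ₗ (ι ∘ₗ A.P m) := by
          rw [← LinearMap.comp_assoc, hπι, LinearMap.id_comp]
      _ = π ∘ₗ (vacuumP F X m ∘ₗ ι) := by rw [hιP]
      _ = 0 := by rw [vacuumP_eq_zero hm]; simp
  have hQid : ∀ n : X₂, A.Q (X.δ n) = LinearMap.id := by
    intro n
    calc A.Q (X.δ n) = π ∘ₗ (ι ∘ₗ A.Q (X.δ n)) := by
          rw [← LinearMap.comp_assoc, hπι, LinearMap.id_comp]
      _ = π ∘ₗ (vacuumQ F X (X.δ n) ∘ₗ ι) := by rw [hιQ]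
      _ = π ∘ₗ ι := by rw [vacuumQ_delta, LinearMap.id_comp]
      _ = LinearMap.id := hπι
  have hcomp : braidAux X B.P A.Q ∘ₗ braidAux X A.P B.Q =
      ∑ n : X₂, ∑ m : X₂,
        TensorProduct.map (A.Q (X.δ n) ∘ₗ A.P m) (B.P n ∘ₗ B.Q (X.δ m)) := by
    apply TensorProduct.ext'
    intro v w
    simp only [braidAux, LinearMap.coe_sum, LinearMap.comp_apply,
      LinearMap.sum_apply, Finset.sum_apply, LinearEquiv.coe_coe,
      TensorProduct.comm_tmul, TensorProduct.map_tmul, map_sum,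
      TensorProduct.sum_tmul, TensorProduct.tmul_sum]
    rw [Finset.sum_comm]
  rw [hcomp, map_sum]
  have hterm : ∀ n m : X₂,
      LinearMap.trace F (TensorProduct F V W)
        (TensorProduct.map (A.Q (X.δ n) ∘ₗ A.P m) (B.P n ∘ₗ B.Q (X.δ m))) =
      LinearMap.trace F V (A.P m) * LinearMap.trace F W (B.P n) := by
    intro n m
    rw [LinearMap.trace_tensorProduct', hQid, LinearMap.id_comp]
    by_cases hm : X.δ m = 1
    · rw [hm, B.Q_one, LinearMap.comp_id]
    · rw [hP0 m hm]; simp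
  calc (∑ n : X₂, LinearMap.trace F (TensorProduct F V W)
          (∑ m : X₂, TensorProduct.map (A.Q (X.δ n) ∘ₗ A.P m) (B.P n ∘ₗ B.Q (X.δ m))))
      = ∑ n : X₂, ∑ m : X₂,
          LinearMap.trace F V (A.P m) * LinearMap.trace F W (B.P n) := by
        refine Finset.sum_congr rfl fun n _ => ?_
        rw [map_sum]
        exact Finset.sum_congr rfl fun m _ => hterm n m
    _ = (∑ m : X₂, LinearMap.trace F V (A.P m)) *
          (∑ n : X₂, LinearMap.trace F W (B.P n)) := by
        rw [Finset.sum_mul_sum, Finset.sum_comm]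
    _ = (Module.finrank F V : F) * (Module.finrank F W : F) := by
        rw [← map_sum, ← map_sum, A.P_total, B.P_total,
          LinearMap.trace_id, LinearMap.trace_id]
end

section
/- For a finite crossed module X, the multiplicity μ_p of a simple object p in the vacuum object V_K of M(X) is nonzero if and only if the p-th row of the normalized S-matrix is collinear to the row of the tensor unit, and in that case μ_p = d_p (the categorical dimension of p). -/
section HomVacuum

variable {F : Type} [Field F] {X₁ X₂ : Type} [Group X₁] [Group X₂]
  [Fintype X₁] [Fintype X₂] [DecidableEq X₂] {X : CrossedModule X₁ X₂}
  {V : Type} [AddCommGroup V] [Module F V]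

/-- The space `Hom_{M(X)}(A, V_K)` of morphisms from `A` to the vacuum object,
as a linear subspace of the space of all linear maps; its dimension is the
multiplicity `μ_p` of `A = p` in `V_K`. -/
def homToVacuum [X.δ.range.Normal] (A : XRep F X V) :
    Submodule F (V →ₗ[F] VacuumCarrier F X) where
  carrier := {f | (∀ m : X₂, f ∘ₗ A.P m = vacuumP F X m ∘ₗ f) ∧
    (∀ g : X₁, f ∘ₗ A.Q g = vacuumQ F X g ∘ₗ f)}
  add_mem' := by
    intro f g hf hg
    exact ⟨fun m => by rw [LinearMap.add_comp, LinearMap.comp_add, hf.1 m, hg.1 m],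
      fun k => by rw [LinearMap.add_comp, LinearMap.comp_add, hf.2 k, hg.2 k]⟩
  zero_mem' := ⟨fun m => by simp, fun g => by simp⟩
  smul_mem' := by
    intro c f hf
    exact ⟨fun m => by rw [LinearMap.smul_comp, LinearMap.comp_smul, hf.1 m],
      fun k => by rw [LinearMap.smul_comp, LinearMap.comp_smul, hf.2 k]⟩

end HomVacuum

section AuxBasic

variable {F : Type} [Field F] {X₁ X₂ : Type} [Group X₁] [Group X₂]
  [Fintype X₁] [Fintype X₂] [DecidableEq X₂] {X : CrossedModule X₁ X₂}
  {V : Type} [AddCommGroup V] [Module F V]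
  {W : Type} [AddCommGroup W] [Module F W]

namespace CrossedModule

lemma act_act_inv (X : CrossedModule X₁ X₂) (m : X₂) (g : X₁) :
    X.act (X.act m g) g⁻¹ = m := by
  rw [← X.act_mul, mul_inv_cancel, X.act_one]

lemma act_inv_act (X : CrossedModule X₁ X₂) (m : X₂) (g : X₁) :
    X.act (X.act m g⁻¹) g = m := by
  rw [← X.act_mul, inv_mul_cancel, X.act_one]

lemma act_right_injective (X : CrossedModule X₁ X₂) (g : X₁) {m n : X₂}
    (h : X.act m g = X.act n g) : m = n := by
  have h2 := congrArg (fun z => X.act z g⁻¹) h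
  simpa [X.act_act_inv] using h2

lemma act_one_left (X : CrossedModule X₁ X₂) (g : X₁) : X.act 1 g = 1 := by
  have h := X.act_hom 1 1 g
  rw [one_mul] at h
  have h2 : X.act 1 g * 1 = X.act 1 g * X.act 1 g := by rw [mul_one, ← h]
  exact (mul_left_cancel h2).symm

lemma ker_central (X : CrossedModule X₁ X₂) {x : X₂} (hx : X.δ x = 1) (n : X₂) :
    x * n = n * x := by
  have h := X.peiffer n x
  rw [hx, X.act_one] at h
  have h2 : x * n = x * (x⁻¹ * n * x) := by rw [← h]
  rw [h2]; group

lemma act_ker_fix (X : CrossedModule X₁ X₂) {x : X₂} (hx : X.δ x = 1) (n : X₂) :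
    X.act x (X.δ n) = x := by
  rw [X.peiffer, mul_assoc, X.ker_central hx n]
  group

lemma act_range_fix (X : CrossedModule X₁ X₂) {x : X₂} (hx : X.δ x = 1) {g : X₁}
    (hg : g ∈ X.δ.range) : X.act x g = x := by
  obtain ⟨n, rfl⟩ := hg
  exact X.act_ker_fix hx n

end CrossedModule

namespace XRep

lemma Q_comp_Q_inv (A : XRep F X V) (g : X₁) : A.Q g ∘ₗ A.Q g⁻¹ = LinearMap.id := by
  rw [← A.Q_mul, mul_inv_cancel, A.Q_one]

lemma Q_inv_comp_Q (A : XRep F X V) (g : X₁) : A.Q g⁻¹ ∘ₗ A.Q g = LinearMap.id := by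
  rw [← A.Q_mul, inv_mul_cancel, A.Q_one]

lemma QP_swap (A : XRep F X V) (m : X₂) (g : X₁) :
    A.Q g ∘ₗ A.P m = A.P (X.act m g⁻¹) ∘ₗ A.Q g := by
  have h := A.PQ_compat (X.act m g⁻¹) g
  rw [X.act_inv_act] at h
  exact h.symm

lemma P_comp_self (A : XRep F X V) (m : X₂) : A.P m ∘ₗ A.P m = A.P m := by
  rw [A.P_orth, if_pos rfl]

lemma Q_pow (A : XRep F X V) (g : X₁) : ∀ k : ℕ, A.Q (g ^ k) = (A.Q g) ^ k
  | 0 => by rw [pow_zero, pow_zero, A.Q_one]; rfl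
  | (k+1) => by
      rw [pow_succ, pow_succ, A.Q_mul, Q_pow A g k]; rfl

/-- `A` is of "vacuum type": the action of the image of `δ` is trivial and the
grading is supported on the kernel of `δ`. -/
def VacType (A : XRep F X V) : Prop :=
  (∀ n : X₂, A.Q (X.δ n) = LinearMap.id) ∧ (∀ m : X₂, X.δ m ≠ 1 → A.P m = 0)

lemma VacType.Q_range_eq_id {A : XRep F X V} (h : A.VacType) {g : X₁}
    (hg : g ∈ X.δ.range) : A.Q g = LinearMap.id := by
  obtain ⟨n, rfl⟩ := hg
  exact h.1 n

end XRep

end AuxBasic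
set_option linter.unusedSectionVars false

section TracePi

variable {F : Type} [Field F]

/-- The endomorphism `f ↦ fun i => c i * f (σ i)` of `ι → F`. -/
def diagPerm {ι : Type} (c : ι → F) (σ : ι → ι) : (ι → F) →ₗ[F] (ι → F) where
  toFun f := fun i => c i * f (σ i)
  map_add' f g := by funext i; simp [mul_add]
  map_smul' r f := by funext i; simp; ring

lemma trace_diagPerm {ι : Type} [Fintype ι] [DecidableEq ι] (c : ι → F) (σ : ι → ι) :
    LinearMap.trace F (ι → F) (diagPerm c σ) = ∑ i : ι, if σ i = i then c i else 0 := by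
  rw [LinearMap.trace_eq_matrix_trace F (Pi.basisFun F ι), Matrix.trace]
  apply Finset.sum_congr rfl
  intro i _
  simp only [Matrix.diag_apply, LinearMap.toMatrix_apply, Pi.basisFun_repr, Pi.basisFun_apply]
  by_cases h : σ i = i <;> simp [diagPerm, h, Pi.single_apply]

end TracePi

section PairSum

open TensorProduct

variable {F : Type} [Field F] {X₁ X₂ : Type} [Group X₁] [Group X₂]
  [Fintype X₁] [Fintype X₂] [DecidableEq X₂] {X : CrossedModule X₁ X₂}
  {V : Type} [AddCommGroup V] [Module F V]
  {W : Type} [AddCommGroup W] [Module F W]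

/-- The sum `∑_{m,n} tr(Q_A(∂n) P_A(m)) tr(P_B(n) Q_B(∂m))`, i.e. `|X|` times the
`S`-matrix entry `S_{AB}`. -/
noncomputable def pairSum (A : XRep F X V) (B : XRep F X W) : F :=
  ∑ m : X₂, ∑ n : X₂,
    LinearMap.trace F V (A.Q (X.δ n) ∘ₗ A.P m) * LinearMap.trace F W (B.P n ∘ₗ B.Q (X.δ m))

lemma sumComp {ι U₁ U₂ U₃ : Type} [AddCommGroup U₁] [Module F U₁] [AddCommGroup U₂]
    [Module F U₂] [AddCommGroup U₃] [Module F U₃] (s : Finset ι) (f : ι → (U₂ →ₗ[F] U₃))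
    (g : U₁ →ₗ[F] U₂) : (∑ i ∈ s, f i) ∘ₗ g = ∑ i ∈ s, f i ∘ₗ g := by
  classical
  induction s using Finset.induction with
  | empty => simp
  | insert _ _ h ih => simp [Finset.sum_insert h, LinearMap.add_comp, ih]

lemma compSum {ι U₁ U₂ U₃ : Type} [AddCommGroup U₁] [Module F U₁] [AddCommGroup U₂]
    [Module F U₂] [AddCommGroup U₃] [Module F U₃] (s : Finset ι) (f : U₂ →ₗ[F] U₃)
    (g : ι → (U₁ →ₗ[F] U₂)) : f ∘ₗ (∑ i ∈ s, g i) = ∑ i ∈ s, f ∘ₗ g i := by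
  classical
  induction s using Finset.induction with
  | empty => simp
  | insert _ _ h ih => simp [Finset.sum_insert h, LinearMap.comp_add, ih]

lemma braid_term (A : XRep F X V) (B : XRep F X W) (m n : X₂) :
    (TensorProduct.map (A.Q (X.δ n)) (B.P n) ∘ₗ (TensorProduct.comm F W V).toLinearMap) ∘ₗ
      (TensorProduct.map (B.Q (X.δ m)) (A.P m) ∘ₗ (TensorProduct.comm F V W).toLinearMap)
    = TensorProduct.map (A.Q (X.δ n) ∘ₗ A.P m) (B.P n ∘ₗ B.Q (X.δ m)) := by
  apply TensorProduct.ext'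
  intro v w
  simp

lemma trace_braid (A : XRep F X V) (B : XRep F X W) [FiniteDimensional F V]
    [FiniteDimensional F W] :
    LinearMap.trace F (TensorProduct F V W) (braidAux X B.P A.Q ∘ₗ braidAux X A.P B.Q)
      = pairSum A B := by
  unfold braidAux pairSum
  rw [sumComp]
  simp only [compSum]
  rw [map_sum]
  simp only [map_sum]
  rw [Finset.sum_comm]
  apply Finset.sum_congr rfl
  intro m _
  apply Finset.sum_congr rfl
  intro n _
  rw [braid_term A B m n, LinearMap.trace_tensorProduct']

lemma pairSum_of_vacType (A : XRep F X V) [FiniteDimensional F V] (hA : A.VacType)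
    (B : XRep F X W) [FiniteDimensional F W] :
    pairSum A B = (Module.finrank F V : F) * (Module.finrank F W : F) := by
  unfold pairSum
  have hW : ∑ n : X₂, LinearMap.trace F W (B.P n) = (Module.finrank F W : F) := by
    rw [← map_sum, B.P_total, LinearMap.trace_id]
  have hsum : ∀ m : X₂,
      (∑ n : X₂, LinearMap.trace F V (A.Q (X.δ n) ∘ₗ A.P m) *
        LinearMap.trace F W (B.P n ∘ₗ B.Q (X.δ m)))
      = LinearMap.trace F V (A.P m) * (Module.finrank F W : F) := by
    intro m
    by_cases hm : X.δ m = 1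
    · rw [← hW, Finset.mul_sum]
      apply Finset.sum_congr rfl
      intro n _
      rw [hA.1 n, LinearMap.id_comp, hm, B.Q_one, LinearMap.comp_id]
    · have h0 := hA.2 m hm
      rw [h0]
      simp
  rw [Finset.sum_congr rfl (fun m _ => hsum m), ← Finset.sum_mul, ← map_sum, A.P_total,
    LinearMap.trace_id]

end PairSum
section VacuumHom

variable {F : Type} [Field F] {X₁ X₂ : Type} [Group X₁] [Group X₂]
  [Fintype X₁] [Fintype X₂] [DecidableEq X₂] {X : CrossedModule X₁ X₂}
  [X.δ.range.Normal]
  {V : Type} [AddCommGroup V] [Module F V]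

noncomputable local instance : Fintype ↥(X.δ.ker) := Fintype.ofFinite _

lemma vacuumQ_range_eq_id {g : X₁} (hg : g ∈ X.δ.range) :
    vacuumQ F X g = LinearMap.id := by
  apply LinearMap.ext; intro h
  funext p
  have h1 : (QuotientGroup.mk g : X₁ ⧸ X.δ.range) = 1 := (QuotientGroup.eq_one_iff g).mpr hg
  simp [vacuumQ, h1]

lemma vacuumP_apply_not_ker {m : X₂} (hm : X.δ m ≠ 1) (h : VacuumCarrier F X) :
    vacuumP F X m h = 0 := by
  funext p
  have hne : X.act m (Quotient.out p.2) ≠ (p.1 : X₂) := by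
    intro he
    apply hm
    have h2 : X.δ (p.1 : X₂) = 1 := p.1.2
    rw [← he, X.equivariance] at h2
    have h3 : X.δ m = Quotient.out p.2 * ((Quotient.out p.2)⁻¹ * X.δ m * Quotient.out p.2) *
        (Quotient.out p.2)⁻¹ := by group
    rw [h3, h2]
    group
  simp [vacuumP, hne]

/-- Summing the values of an element of the vacuum carrier over `ker ∂ × {1}`. -/
noncomputable def sumEval (A : XRep F X V) (f : V →ₗ[F] VacuumCarrier F X) : V →ₗ[F] F where
  toFun w := ∑ x : X.δ.ker, f w (x, (1 : X₁ ⧸ X.δ.range))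
  map_add' w1 w2 := by simp [Finset.sum_add_distrib]
  map_smul' c w := by simp [Finset.mul_sum]

/-- The morphism `A → V_K` associated to a linear functional `ψ` on `V`:
`w ↦ ((x, Iy) ↦ ψ(P(x) Q(y⁻¹) w))`. -/
noncomputable def fromDualMap (A : XRep F X V) (ψ : V →ₗ[F] F) :
    V →ₗ[F] VacuumCarrier F X where
  toFun w := fun p => ψ (A.P p.1 (A.Q (Quotient.out p.2)⁻¹ w))
  map_add' w1 w2 := by funext p; simp
  map_smul' c w := by funext p; simp

lemma out_one_mem : Quotient.out (1 : X₁ ⧸ X.δ.range) ∈ X.δ.range := by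
  have h : (QuotientGroup.mk (Quotient.out (1 : X₁ ⧸ X.δ.range)) : X₁ ⧸ X.δ.range) = 1 :=
    Quotient.out_eq (1 : X₁ ⧸ X.δ.range)
  exact (QuotientGroup.eq_one_iff _).mp h

lemma fromDualMap_mem (A : XRep F X V) (hA : A.VacType) (ψ : V →ₗ[F] F) :
    fromDualMap A ψ ∈ homToVacuum A := by
  constructor
  · intro m
    apply LinearMap.ext; intro w
    funext p
    obtain ⟨x, c⟩ := p
    show ψ (A.P (x : X₂) (A.Q (Quotient.out c)⁻¹ (A.P m w))) =
      if X.act m (Quotient.out c) = (x : X₂)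
        then ψ (A.P (x : X₂) (A.Q (Quotient.out c)⁻¹ w)) else 0
    set y := Quotient.out c with hy
    have hswap : A.Q y⁻¹ ∘ₗ A.P m = A.P (X.act m y) ∘ₗ A.Q y⁻¹ := by
      have h := A.QP_swap m y⁻¹
      rw [inv_inv] at h
      exact h
    have h1 : A.Q y⁻¹ (A.P m w) = A.P (X.act m y) (A.Q y⁻¹ w) := by
      simpa using LinearMap.congr_fun hswap w
    have h2 : A.P (x : X₂) (A.P (X.act m y) (A.Q y⁻¹ w)) =
        if (x : X₂) = X.act m y then A.P (x : X₂) (A.Q y⁻¹ w) else 0 := by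
      have h3 := LinearMap.congr_fun (A.P_orth (x : X₂) (X.act m y)) (A.Q y⁻¹ w)
      simp only [LinearMap.comp_apply] at h3
      rw [h3]
      by_cases hc : (x : X₂) = X.act m y <;> simp [hc]
    rw [h1, h2]
    by_cases hc : X.act m y = (x : X₂)
    · rw [if_pos hc.symm, if_pos hc]
    · rw [if_neg (fun hh => hc hh.symm), map_zero, if_neg hc]
  · intro g
    apply LinearMap.ext; intro w
    funext p
    obtain ⟨x, c⟩ := p
    show ψ (A.P (x : X₂) (A.Q (Quotient.out c)⁻¹ (A.Q g w))) =
      ψ (A.P (x : X₂) (A.Q (Quotient.out ((QuotientGroup.mk g)⁻¹ * c))⁻¹ w))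
    set y := Quotient.out c with hy
    set z := Quotient.out ((QuotientGroup.mk g)⁻¹ * c) with hz
    have hmem : y⁻¹ * g * z ∈ X.δ.range := by
      apply (QuotientGroup.eq_one_iff _).mp
      have h1 : (QuotientGroup.mk y : X₁ ⧸ X.δ.range) = c := Quotient.out_eq c
      have h2 : (QuotientGroup.mk z : X₁ ⧸ X.δ.range) = (QuotientGroup.mk g)⁻¹ * c :=
        Quotient.out_eq _
      show QuotientGroup.mk (y⁻¹ * g * z) = 1
      rw [QuotientGroup.mk_mul, QuotientGroup.mk_mul, QuotientGroup.mk_inv, h1, h2]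
      group
    have hQ : A.Q (y⁻¹ * g) = A.Q z⁻¹ := by
      have h2 : A.Q (y⁻¹ * g * z) = LinearMap.id := hA.Q_range_eq_id hmem
      have h3 : y⁻¹ * g = (y⁻¹ * g * z) * z⁻¹ := by group
      rw [h3, A.Q_mul, h2, LinearMap.id_comp]
    show ψ (A.P (x : X₂) (A.Q y⁻¹ (A.Q g w))) = _
    have h4 : A.Q y⁻¹ (A.Q g w) = A.Q (y⁻¹ * g) w := by
      have := LinearMap.congr_fun (A.Q_mul y⁻¹ g) w
      simp only [LinearMap.comp_apply] at this
      rw [this]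
    rw [h4, hQ]

/-- For a vacuum-type representation, `Hom(A, V_K)` is isomorphic to the dual of `V`. -/
noncomputable def homVacEquiv (A : XRep F X V) (hA : A.VacType) :
    (homToVacuum A) ≃ₗ[F] (V →ₗ[F] F) where
  toFun f := sumEval A f.1
  map_add' f g := by
    apply LinearMap.ext; intro w
    simp [sumEval, Finset.sum_add_distrib]
  map_smul' c f := by
    apply LinearMap.ext; intro w
    simp [sumEval, Finset.mul_sum]
  invFun ψ := ⟨fromDualMap A ψ, fromDualMap_mem A hA ψ⟩
  left_inv f := by
    apply Subtype.ext
    apply LinearMap.ext; intro w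
    funext p
    obtain ⟨x, c⟩ := p
    obtain ⟨f, hf⟩ := f
    set y := Quotient.out c with hy
    set u := A.Q y⁻¹ w with hu
    show ∑ x' : X.δ.ker, f (A.P (x : X₂) u) (x', (1 : X₁ ⧸ X.δ.range)) = f w (x, c)
    have h1 : f (A.P (x : X₂) u) = vacuumP F X (x : X₂) (f u) := by
      simpa using LinearMap.congr_fun (hf.1 (x : X₂)) u
    have hact : X.act (x : X₂) (Quotient.out (1 : X₁ ⧸ X.δ.range)) = (x : X₂) :=
      X.act_range_fix x.2 out_one_mem
    have h2 : ∀ x' : X.δ.ker, f (A.P (x : X₂) u) (x', (1 : X₁ ⧸ X.δ.range)) =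
        if x = x' then f u (x', (1 : X₁ ⧸ X.δ.range)) else 0 := by
      intro x'
      rw [h1]
      show (if X.act (x : X₂) (Quotient.out (1 : X₁ ⧸ X.δ.range)) = (x' : X₂)
        then f u (x', (1 : X₁ ⧸ X.δ.range)) else 0) = _
      rw [hact]
      by_cases hc : x = x'
      · rw [if_pos (by rw [hc]), if_pos hc]
      · rw [if_neg (fun hh => hc (Subtype.ext hh)), if_neg hc]
    rw [Finset.sum_congr rfl (fun x' _ => h2 x'), Finset.sum_ite_eq Finset.univ x
      (fun x' => f u (x', (1 : X₁ ⧸ X.δ.range))), if_pos (Finset.mem_univ x)]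
    have h3 : f u = vacuumQ F X y⁻¹ (f w) := by
      simpa using LinearMap.congr_fun (hf.2 y⁻¹) w
    rw [h3]
    show f w (x, (QuotientGroup.mk y⁻¹)⁻¹ * (1 : X₁ ⧸ X.δ.range)) = f w (x, c)
    rw [QuotientGroup.mk_inv, inv_inv, mul_one]
    have : (QuotientGroup.mk y : X₁ ⧸ X.δ.range) = c := Quotient.out_eq c
    rw [this]
  right_inv ψ := by
    apply LinearMap.ext; intro w
    show ∑ x : X.δ.ker, ψ (A.P (x : X₂) (A.Q (Quotient.out (1 : X₁ ⧸ X.δ.range))⁻¹ w)) = ψ w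
    have hQ : A.Q (Quotient.out (1 : X₁ ⧸ X.δ.range))⁻¹ = LinearMap.id :=
      hA.Q_range_eq_id (inv_mem out_one_mem)
    simp only [hQ, LinearMap.id_apply]
    rw [← map_sum]
    congr 1
    classical
    have h1 : ∑ m ∈ Finset.univ.filter (fun m => m ∈ X.δ.ker), A.P m w
        = ∑ x : X.δ.ker, A.P (x : X₂) w :=
      Finset.sum_subtype _ (fun m => by simp) (fun m => A.P m w)
    rw [← h1, Finset.sum_filter_of_ne, ← LinearMap.sum_apply, A.P_total, LinearMap.id_apply]
    intro m _ hne
    rw [MonoidHom.mem_ker]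
    by_contra hd
    exact hne (by rw [hA.2 m hd]; simp)

lemma finrank_homToVacuum_of_vacType (A : XRep F X V) [FiniteDimensional F V]
    (hA : A.VacType) :
    Module.finrank F (homToVacuum A) = Module.finrank F V := by
  rw [LinearEquiv.finrank_eq (homVacEquiv A hA)]
  exact Subspace.dual_finrank_eq

lemma vacType_of_finrank_ne_zero (A : XRep F X V) (hA : A.IsSimple)
    (h : Module.finrank F (homToVacuum A) ≠ 0) : A.VacType := by
  have hbot : homToVacuum A ≠ ⊥ := by
    intro hb
    rw [hb, finrank_bot] at h
    exact h rfl
  obtain ⟨f, hf, hfne⟩ := Submodule.ne_bot_iff _ |>.mp hbot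
  have hkerP : ∀ m : X₂, (LinearMap.ker f).map (A.P m) ≤ LinearMap.ker f := by
    intro m
    rintro _ ⟨v, hv, rfl⟩
    have h1 : f (A.P m v) = vacuumP F X m (f v) := by
      simpa using LinearMap.congr_fun (hf.1 m) v
    rw [LinearMap.mem_ker, h1, LinearMap.mem_ker.mp hv, map_zero]
  have hkerQ : ∀ g : X₁, (LinearMap.ker f).map (A.Q g) ≤ LinearMap.ker f := by
    intro g
    rintro _ ⟨v, hv, rfl⟩
    have h1 : f (A.Q g v) = vacuumQ F X g (f v) := by
      simpa using LinearMap.congr_fun (hf.2 g) v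
    rw [LinearMap.mem_ker, h1, LinearMap.mem_ker.mp hv, map_zero]
  have hinj : Function.Injective f := by
    rcases hA.2 (LinearMap.ker f) hkerP hkerQ with hk | hk
    · exact LinearMap.ker_eq_bot.mp hk
    · exact absurd (LinearMap.ker_eq_top.mp hk) hfne
  constructor
  · intro n
    apply LinearMap.ext; intro v
    apply hinj
    have h1 : f (A.Q (X.δ n) v) = vacuumQ F X (X.δ n) (f v) := by
      simpa using LinearMap.congr_fun (hf.2 (X.δ n)) v
    rw [h1, vacuumQ_range_eq_id ⟨n, rfl⟩]
    rfl
  · intro m hm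
    apply LinearMap.ext; intro v
    apply hinj
    have h1 : f (A.P m v) = vacuumP F X m (f v) := by
      simpa using LinearMap.congr_fun (hf.1 m) v
    rw [h1, vacuumP_apply_not_ker hm, LinearMap.zero_apply, map_zero]

end VacuumHom
section Maschke

variable {F : Type} [Field F] [CharZero F] {X₁ X₂ : Type} [Group X₁] [Group X₂]
  [Fintype X₁] [Fintype X₂] [DecidableEq X₂] {X : CrossedModule X₁ X₂}
  {V : Type} [AddCommGroup V] [Module F V]
  {W : Type} [AddCommGroup W] [Module F W]

lemma trace_eq_restrict_add_restrict [FiniteDimensional F W] (f : W →ₗ[F] W)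
    (S T : Submodule F W) (hc : IsCompl S T)
    (hS : ∀ x ∈ S, f x ∈ S) (hT : ∀ x ∈ T, f x ∈ T) :
    LinearMap.trace F W f =
      LinearMap.trace F S (f.restrict hS) + LinearMap.trace F T (f.restrict hT) := by
  have he : (Submodule.prodEquivOfIsCompl S T hc).conj
      (LinearMap.prodMap (f.restrict hS) (f.restrict hT)) = f := by
    apply LinearMap.ext
    intro w
    obtain ⟨⟨s, t⟩, rfl⟩ := (Submodule.prodEquivOfIsCompl S T hc).surjective w
    rw [LinearEquiv.conj_apply]
    simp only [LinearMap.comp_apply, LinearEquiv.coe_coe, LinearEquiv.symm_apply_apply]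
    have h1 : ∀ p : ↥S × ↥T, Submodule.prodEquivOfIsCompl S T hc p = (p.1 : W) + (p.2 : W) := by
      intro p
      have := Submodule.coe_prodEquivOfIsCompl S T hc
      rw [← LinearEquiv.coe_coe, this]
      rfl
    rw [h1, h1]
    simp only [LinearMap.prodMap_apply, LinearMap.restrict_apply, map_add]
  rw [← LinearMap.trace_prodMap' (f.restrict hS) (f.restrict hT),
    ← LinearMap.trace_conj' ((f.restrict hS).prodMap (f.restrict hT))
      (Submodule.prodEquivOfIsCompl S T hc), he]

/-- Restriction of a crossed-module representation to an invariant subspace. -/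
def XRep.res (B : XRep F X W) (S : Submodule F W)
    (hP : ∀ m : X₂, ∀ x ∈ S, B.P m x ∈ S) (hQ : ∀ g : X₁, ∀ x ∈ S, B.Q g x ∈ S) :
    XRep F X S where
  P m := (B.P m).restrict (hP m)
  Q g := (B.Q g).restrict (hQ g)
  P_orth m n := by
    apply LinearMap.ext; intro x; apply Subtype.ext
    have h := LinearMap.congr_fun (B.P_orth m n) (x : W)
    simp only [LinearMap.comp_apply] at h ⊢
    by_cases hc : m = n
    · subst hc
      simp only [if_pos rfl] at h ⊢
      simpa [LinearMap.restrict_apply] using h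
    · simp only [if_neg hc] at h ⊢
      simpa [LinearMap.restrict_apply] using h
  P_total := by
    apply LinearMap.ext; intro x; apply Subtype.ext
    have h := LinearMap.congr_fun B.P_total (x : W)
    simp only [LinearMap.sum_apply, LinearMap.id_apply] at h ⊢
    rw [← h]
    simp [LinearMap.restrict_apply]
  Q_one := by
    apply LinearMap.ext; intro x; apply Subtype.ext
    have h := LinearMap.congr_fun B.Q_one (x : W)
    simpa [LinearMap.restrict_apply] using h
  Q_mul g h := by
    apply LinearMap.ext; intro x; apply Subtype.ext
    have h2 := LinearMap.congr_fun (B.Q_mul g h) (x : W)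
    simp only [LinearMap.comp_apply] at h2 ⊢
    simpa [LinearMap.restrict_apply] using h2
  PQ_compat m g := by
    apply LinearMap.ext; intro x; apply Subtype.ext
    have h := LinearMap.congr_fun (B.PQ_compat m g) (x : W)
    simp only [LinearMap.comp_apply] at h ⊢
    simpa [LinearMap.restrict_apply] using h

lemma XRep.res_PQ (B : XRep F X W) (S : Submodule F W)
    (hP : ∀ m : X₂, ∀ x ∈ S, B.P m x ∈ S) (hQ : ∀ g : X₁, ∀ x ∈ S, B.Q g x ∈ S)
    (n m : X₂) (hf : ∀ x ∈ S, (B.P n ∘ₗ B.Q (X.δ m)) x ∈ S) :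
    (B.res S hP hQ).P n ∘ₗ (B.res S hP hQ).Q (X.δ m) = (B.P n ∘ₗ B.Q (X.δ m)).restrict hf := by
  apply LinearMap.ext; intro x; apply Subtype.ext
  simp [XRep.res, LinearMap.restrict_apply]

lemma pairSum_res_add (A : XRep F X V) [FiniteDimensional F V] (B : XRep F X W)
    [FiniteDimensional F W] (S T : Submodule F W) (hc : IsCompl S T)
    (hPS : ∀ m : X₂, ∀ x ∈ S, B.P m x ∈ S) (hQS : ∀ g : X₁, ∀ x ∈ S, B.Q g x ∈ S)
    (hPT : ∀ m : X₂, ∀ x ∈ T, B.P m x ∈ T) (hQT : ∀ g : X₁, ∀ x ∈ T, B.Q g x ∈ T) :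
    pairSum A B = pairSum A (B.res S hPS hQS) + pairSum A (B.res T hPT hQT) := by
  unfold pairSum
  rw [← Finset.sum_add_distrib]
  apply Finset.sum_congr rfl
  intro m _
  rw [← Finset.sum_add_distrib]
  apply Finset.sum_congr rfl
  intro n _
  have hfS : ∀ x ∈ S, (B.P n ∘ₗ B.Q (X.δ m)) x ∈ S := by
    intro x hx
    exact hPS n _ (hQS (X.δ m) x hx)
  have hfT : ∀ x ∈ T, (B.P n ∘ₗ B.Q (X.δ m)) x ∈ T := by
    intro x hx
    exact hPT n _ (hQT (X.δ m) x hx)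
  rw [XRep.res_PQ B S hPS hQS n m hfS, XRep.res_PQ B T hPT hQT n m hfT,
    trace_eq_restrict_add_restrict (B.P n ∘ₗ B.Q (X.δ m)) S T hc hfS hfT, mul_add]

lemma exists_equivariant_proj (B : XRep F X W) (S : Submodule F W)
    (hP : ∀ m : X₂, S.map (B.P m) ≤ S) (hQ : ∀ g : X₁, S.map (B.Q g) ≤ S) :
    ∃ e : W →ₗ[F] W, (∀ w, e w ∈ S) ∧ (∀ w ∈ S, e w = w) ∧
      (∀ m : X₂, e ∘ₗ B.P m = B.P m ∘ₗ e) ∧ (∀ g : X₁, e ∘ₗ B.Q g = B.Q g ∘ₗ e) := by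
  have hP' : ∀ m : X₂, ∀ x ∈ S, B.P m x ∈ S := fun m x hx =>
    hP m (Submodule.mem_map_of_mem hx)
  have hQ' : ∀ g : X₁, ∀ x ∈ S, B.Q g x ∈ S := fun g x hx =>
    hQ g (Submodule.mem_map_of_mem hx)
  obtain ⟨S', hS'⟩ := Submodule.exists_isCompl S
  set e₀ : W →ₗ[F] W := S.subtype ∘ₗ S.projectionOnto S' hS' with he₀
  have he₀S : ∀ w, e₀ w ∈ S := fun w => (S.projectionOnto S' hS' w).2
  have he₀id : ∀ w ∈ S, e₀ w = w := by
    intro w hw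
    show (S.subtype) (S.projectionOnto S' hS' w) = w
    have : S.projectionOnto S' hS' w = ⟨w, hw⟩ := by
      have h2 := Submodule.linearProjOfIsCompl_apply_left hS' (⟨w, hw⟩ : S)
      simpa using h2
    rw [this]
    rfl
  set e₁ : W →ₗ[F] W := ∑ m : X₂, B.P m ∘ₗ e₀ ∘ₗ B.P m with he₁
  have he₁S : ∀ w, e₁ w ∈ S := by
    intro w
    rw [he₁, LinearMap.sum_apply]
    exact Submodule.sum_mem _ (fun m _ => hP' m _ (he₀S _))
  have he₁id : ∀ w ∈ S, e₁ w = w := by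
    intro w hw
    rw [he₁, LinearMap.sum_apply]
    have hterm : ∀ m : X₂, (B.P m ∘ₗ e₀ ∘ₗ B.P m) w = B.P m w := by
      intro m
      simp only [LinearMap.comp_apply]
      rw [he₀id _ (hP' m w hw)]
      have := LinearMap.congr_fun (B.P_comp_self m) w
      simpa using this
    rw [Finset.sum_congr rfl (fun m _ => hterm m), ← LinearMap.sum_apply, B.P_total]
    rfl
  have he₁P : ∀ m' : X₂, e₁ ∘ₗ B.P m' = B.P m' ∘ₗ e₁ := by
    intro m'
    apply LinearMap.ext; intro w
    simp only [LinearMap.comp_apply, he₁, LinearMap.sum_apply, map_sum]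
    have hL : ∀ m : X₂, B.P m (e₀ (B.P m (B.P m' w)))
        = if m = m' then B.P m' (e₀ (B.P m' w)) else 0 := by
      intro m
      have h := LinearMap.congr_fun (B.P_orth m m') w
      simp only [LinearMap.comp_apply] at h
      by_cases hc : m = m'
      · subst hc
        rw [if_pos rfl] at h
        rw [h, if_pos rfl]
      · rw [if_neg hc] at h
        simp only [LinearMap.zero_apply] at h
        rw [h, if_neg hc]
        simp
    have hR : ∀ m : X₂, B.P m' (B.P m (e₀ (B.P m w)))
        = if m = m' then B.P m' (e₀ (B.P m' w)) else 0 := by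
      intro m
      have h := LinearMap.congr_fun (B.P_orth m' m) (e₀ (B.P m w))
      simp only [LinearMap.comp_apply] at h
      by_cases hc : m = m'
      · subst hc
        rw [if_pos rfl] at h
        rw [h, if_pos rfl]
      · rw [if_neg (fun hh => hc hh.symm)] at h
        simp only [LinearMap.zero_apply] at h
        rw [h, if_neg hc]
    rw [Finset.sum_congr rfl (fun m _ => hL m), Finset.sum_congr rfl (fun m _ => hR m)]
  set N : F := (Fintype.card X₁ : F) with hN
  have hN0 : N ≠ 0 := Nat.cast_ne_zero.mpr Fintype.card_ne_zero
  set e : W →ₗ[F] W := N⁻¹ • ∑ g : X₁, B.Q g ∘ₗ e₁ ∘ₗ B.Q g⁻¹ with he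
  refine ⟨e, ?_, ?_, ?_, ?_⟩
  · intro w
    rw [he, LinearMap.smul_apply, LinearMap.sum_apply]
    exact Submodule.smul_mem _ _ (Submodule.sum_mem _ (fun g _ => hQ' g _ (he₁S _)))
  · intro w hw
    rw [he, LinearMap.smul_apply, LinearMap.sum_apply]
    have hterm : ∀ g : X₁, (B.Q g ∘ₗ e₁ ∘ₗ B.Q g⁻¹) w = w := by
      intro g
      simp only [LinearMap.comp_apply]
      rw [he₁id _ (hQ' g⁻¹ w hw)]
      have := LinearMap.congr_fun (B.Q_comp_Q_inv g) w
      simpa using this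
    rw [Finset.sum_congr rfl (fun g _ => hterm g), Finset.sum_const, Finset.card_univ,
      ← Nat.cast_smul_eq_nsmul F, smul_smul, inv_mul_cancel₀ hN0, one_smul]
  · intro m'
    apply LinearMap.ext; intro w
    simp only [he, LinearMap.comp_apply, LinearMap.smul_apply, LinearMap.sum_apply,
      map_smul, map_sum]
    congr 1
    apply Finset.sum_congr rfl
    intro g _
    have h1 : B.Q g⁻¹ (B.P m' w) = B.P (X.act m' g) (B.Q g⁻¹ w) := by
      have h := B.QP_swap m' g⁻¹
      rw [inv_inv] at h
      simpa using LinearMap.congr_fun h w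
    have h2 : e₁ (B.P (X.act m' g) (B.Q g⁻¹ w)) = B.P (X.act m' g) (e₁ (B.Q g⁻¹ w)) := by
      simpa using LinearMap.congr_fun (he₁P (X.act m' g)) (B.Q g⁻¹ w)
    have h3 : B.Q g (B.P (X.act m' g) (e₁ (B.Q g⁻¹ w))) = B.P m' (B.Q g (e₁ (B.Q g⁻¹ w))) := by
      have h := B.QP_swap (X.act m' g) g
      rw [X.act_act_inv] at h
      simpa using LinearMap.congr_fun h (e₁ (B.Q g⁻¹ w))
    rw [h1, h2, h3]
  · intro h
    apply LinearMap.ext; intro w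
    simp only [he, LinearMap.comp_apply, LinearMap.smul_apply, LinearMap.sum_apply,
      map_smul, map_sum]
    congr 1
    have hstep : ∀ g : X₁, B.Q h (B.Q g (e₁ (B.Q g⁻¹ w)))
        = B.Q (h * g) (e₁ (B.Q (h * g)⁻¹ (B.Q h w))) := by
      intro g
      have h1 : B.Q h (B.Q g (e₁ (B.Q g⁻¹ w))) = B.Q (h * g) (e₁ (B.Q g⁻¹ w)) := by
        simpa using (LinearMap.congr_fun (B.Q_mul h g) (e₁ (B.Q g⁻¹ w))).symm
      have h2 : B.Q (h * g)⁻¹ (B.Q h w) = B.Q g⁻¹ w := by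
        have h3 := LinearMap.congr_fun (B.Q_mul (h * g)⁻¹ h) w
        simp only [LinearMap.comp_apply] at h3
        rw [← h3]
        congr 1
        group
      rw [h1, h2]
    rw [Finset.sum_congr rfl (fun g _ => (hstep g))]
    exact (Fintype.sum_equiv (Equiv.mulLeft h)
      (fun g => B.Q (h * g) (e₁ (B.Q (h * g)⁻¹ (B.Q h w))))
      (fun g => B.Q g (e₁ (B.Q g⁻¹ (B.Q h w))))
      (fun g => by simp)).symm

lemma pairSum_all (A : XRep F X V) [FiniteDimensional F V] (α : F)
    (hH : ∀ (W' : Type) (_ : AddCommGroup W') (_ : Module F W')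
      (_ : FiniteDimensional F W') (B : XRep F X W'), B.IsSimple →
      pairSum A B = α * (Module.finrank F W' : F)) :
    ∀ (k : ℕ) (W' : Type) (_ : AddCommGroup W') (_ : Module F W')
      (_ : FiniteDimensional F W') (B : XRep F X W'), Module.finrank F W' = k →
      pairSum A B = α * (Module.finrank F W' : F) := by
  intro k
  induction k using Nat.strong_induction_on with
  | _ k IH =>
    intro W' instG instM instFD B hk
    by_cases hs : B.IsSimple
    · exact hH W' instG instM instFD B hs
    · rcases not_and_or.mp hs with h1 | h2
      · haveI hsub := not_nontrivial_iff_subsingleton.mp h1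
        have hz : ∀ n m : X₂, (B.P n ∘ₗ B.Q (X.δ m)) = 0 := fun n m => Subsingleton.elim _ _
        have hfr : Module.finrank F W' = 0 := Module.finrank_zero_iff.mpr hsub
        simp [pairSum, hz, hfr]
      · push_neg at h2
        obtain ⟨S, hSP, hSQ, hSne⟩ := h2
        have hSbot : S ≠ ⊥ := fun hb => by simp [hb] at hSne
        have hStop : S ≠ ⊤ := fun ht => by simp [ht] at hSne
        obtain ⟨e, heS, heid, heP, heQ⟩ := exists_equivariant_proj B S hSP hSQ
        have hproj : LinearMap.IsProj S e := ⟨heS, heid⟩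
        have hcompl : IsCompl S (LinearMap.ker e) := hproj.isCompl
        set T := LinearMap.ker e with hT
        have hPS : ∀ m : X₂, ∀ x ∈ S, B.P m x ∈ S := fun m x hx =>
          hSP m (Submodule.mem_map_of_mem hx)
        have hQS : ∀ g : X₁, ∀ x ∈ S, B.Q g x ∈ S := fun g x hx =>
          hSQ g (Submodule.mem_map_of_mem hx)
        have hPT : ∀ m : X₂, ∀ x ∈ T, B.P m x ∈ T := by
          intro m x hx
          rw [hT, LinearMap.mem_ker] at hx ⊢
          have h := LinearMap.congr_fun (heP m) x
          simp only [LinearMap.comp_apply] at h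
          rw [h, hx, map_zero]
        have hQT : ∀ g : X₁, ∀ x ∈ T, B.Q g x ∈ T := by
          intro g x hx
          rw [hT, LinearMap.mem_ker] at hx ⊢
          have h := LinearMap.congr_fun (heQ g) x
          simp only [LinearMap.comp_apply] at h
          rw [h, hx, map_zero]
        have hsum : Module.finrank F S + Module.finrank F T = Module.finrank F W' :=
          Submodule.finrank_add_eq_of_isCompl hcompl
        have hfS : Module.finrank F S < k := hk ▸ Submodule.finrank_lt hStop
        have hS0 : Module.finrank F S ≠ 0 := fun h0 => hSbot (Submodule.finrank_eq_zero.mp h0)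
        have hfT : Module.finrank F T < k := by omega
        have h1 := IH _ hfS ↥S inferInstance inferInstance inferInstance (B.res S hPS hQS) rfl
        have h2 := IH _ hfT ↥T inferInstance inferInstance inferInstance (B.res T hPT hQT) rfl
        rw [pairSum_res_add A B S T hcompl hPS hQS hPT hQT, h1, h2, ← mul_add, ← Nat.cast_add,
          hsum]

end Maschke
section Probes

variable {F : Type} [Field F] {X₁ X₂ : Type} [Group X₁] [Group X₂]
  [Fintype X₁] [Fintype X₂] [DecidableEq X₂] {X : CrossedModule X₁ X₂}
  {V : Type} [AddCommGroup V] [Module F V]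

/-- The orbit of `n₀ : X₂` under the right action of `X₁`. -/
abbrev OrbitOf (X : CrossedModule X₁ X₂) (n₀ : X₂) : Type :=
  {n : X₂ // ∃ g : X₁, X.act n₀ g = n}

/-- The action of `X₁` on an orbit. -/
def orbitAct (X : CrossedModule X₁ X₂) (n₀ : X₂) (g : X₁) (n : OrbitOf X n₀) :
    OrbitOf X n₀ :=
  ⟨X.act (n : X₂) g, by
    obtain ⟨h, hh⟩ := n.2
    exact ⟨h * g, by rw [X.act_mul, hh]⟩⟩

/-- The simple object supported on the orbit of `n₀`, with trivial stabilizer datum. -/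
def orbitRep (F : Type) [Field F] (X : CrossedModule X₁ X₂) [Fintype X₁] (n₀ : X₂) :
    XRep F X (OrbitOf X n₀ → F) where
  P n := { toFun := fun f n' => if (n' : X₂) = n then f n' else 0
           map_add' := by
             intro f g; funext n'; by_cases h : (n' : X₂) = n <;> simp [h]
           map_smul' := by
             intro c f; funext n'; by_cases h : (n' : X₂) = n <;> simp [h] }
  Q g := LinearMap.funLeft F F (orbitAct X n₀ g)
  P_orth m n := by
    apply LinearMap.ext; intro f
    by_cases hmn : m = n
    · subst hmn
      rw [if_pos rfl]
      funext n'
      show (if (n' : X₂) = m then (if (n' : X₂) = m then f n' else 0) else 0) =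
        (if (n' : X₂) = m then f n' else 0)
      by_cases h : (n' : X₂) = m <;> simp [h]
    · rw [if_neg hmn]
      funext n'
      show (if (n' : X₂) = m then (if (n' : X₂) = n then f n' else 0) else 0) = 0
      by_cases h : (n' : X₂) = m
      · rw [if_pos h, if_neg (fun hh => hmn (h.symm.trans hh))]
      · rw [if_neg h]
  P_total := by
    apply LinearMap.ext; intro f
    funext n'
    rw [LinearMap.sum_apply, Finset.sum_apply]
    show (∑ n : X₂, if (n' : X₂) = n then f n' else 0) = f n'
    rw [Finset.sum_ite_eq Finset.univ ((n' : X₂)) (fun _ => f n'), if_pos (Finset.mem_univ _)]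
  Q_one := by
    apply LinearMap.ext; intro f
    funext n'
    show f (orbitAct X n₀ 1 n') = f n'
    congr 1
    exact Subtype.ext (X.act_one _)
  Q_mul g h := by
    apply LinearMap.ext; intro f
    funext n'
    show f (orbitAct X n₀ (g * h) n') = f (orbitAct X n₀ h (orbitAct X n₀ g n'))
    congr 1
    exact Subtype.ext (X.act_mul _ g h)
  PQ_compat m g := by
    apply LinearMap.ext; intro f
    funext n'
    show (if (n' : X₂) = m then f (orbitAct X n₀ g n') else 0) =
      (if (X.act (n' : X₂) g) = X.act m g then f (orbitAct X n₀ g n') else 0)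
    by_cases h : (n' : X₂) = m
    · rw [if_pos h, if_pos (by rw [h])]
    · rw [if_neg h, if_neg (fun hh => h (X.act_right_injective g hh))]

lemma orbitRep_isSimple (n₀ : X₂) : (orbitRep F X n₀).IsSimple := by
  constructor
  · haveI : Nonempty (OrbitOf X n₀) := ⟨⟨n₀, 1, X.act_one n₀⟩⟩
    infer_instance
  · intro S hP hQ
    by_cases hbot : S = ⊥
    · exact Or.inl hbot
    refine Or.inr ?_
    obtain ⟨f, hf, hfne⟩ := Submodule.ne_bot_iff _ |>.mp hbot
    have hfn : ∃ n₁ : OrbitOf X n₀, f n₁ ≠ 0 := by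
      by_contra hc
      push_neg at hc
      exact hfne (funext hc)
    obtain ⟨n₁, hn₁⟩ := hfn
    have hsingle : ∀ n₂ : OrbitOf X n₀, (Pi.single n₂ (1 : F) : OrbitOf X n₀ → F) ∈ S := by
      intro n₂
      have h1 : (orbitRep F X n₀).P (↑n₁) f = (Pi.single n₁ (f n₁) : OrbitOf X n₀ → F) := by
        funext n'
        show (if (n' : X₂) = (n₁ : X₂) then f n' else 0) = _
        by_cases h : n' = n₁
        · subst h
          rw [if_pos rfl, Pi.single_eq_same]
        · rw [if_neg (fun hh => h (Subtype.ext hh)), Pi.single_eq_of_ne h]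
      have h2 : (Pi.single n₁ (f n₁) : OrbitOf X n₀ → F) ∈ S := by
        rw [← h1]
        exact hP _ (Submodule.mem_map_of_mem hf)
      have h3 : (Pi.single n₁ (1 : F) : OrbitOf X n₀ → F) ∈ S := by
        have h4 : (f n₁)⁻¹ • (Pi.single n₁ (f n₁) : OrbitOf X n₀ → F) =
            (Pi.single n₁ (1 : F) : OrbitOf X n₀ → F) := by
          rw [← Pi.single_smul, smul_eq_mul, inv_mul_cancel₀ hn₁]
        rw [← h4]
        exact S.smul_mem _ h2
      obtain ⟨g1, hg1⟩ := n₁.2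
      obtain ⟨g2, hg2⟩ := n₂.2
      have hact : X.act (n₁ : X₂) (g1⁻¹ * g2) = (n₂ : X₂) := by
        rw [X.act_mul]
        have hn0 : X.act (n₁ : X₂) g1⁻¹ = n₀ := by rw [← hg1, X.act_act_inv]
        rw [hn0, hg2]
      have h5 : (orbitRep F X n₀).Q (g1⁻¹ * g2)⁻¹ (Pi.single n₁ (1 : F) : OrbitOf X n₀ → F) =
          (Pi.single n₂ (1 : F) : OrbitOf X n₀ → F) := by
        funext n'
        show (Pi.single n₁ (1 : F) : OrbitOf X n₀ → F) (orbitAct X n₀ (g1⁻¹ * g2)⁻¹ n')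
          = (Pi.single n₂ (1 : F) : OrbitOf X n₀ → F) n'
        by_cases h : n' = n₂
        · subst h
          have heq : orbitAct X n₀ (g1⁻¹ * g2)⁻¹ n' = n₁ := by
            apply Subtype.ext
            show X.act (n' : X₂) (g1⁻¹ * g2)⁻¹ = (n₁ : X₂)
            rw [← hact, X.act_act_inv]
          rw [heq, Pi.single_eq_same, Pi.single_eq_same]
        · have hne2 : orbitAct X n₀ (g1⁻¹ * g2)⁻¹ n' ≠ n₁ := by
            intro hh
            apply h
            apply Subtype.ext
            have h6 := congrArg (fun z : OrbitOf X n₀ => X.act (z : X₂) (g1⁻¹ * g2)) hh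
            simp only [orbitAct] at h6
            rw [X.act_inv_act] at h6
            rw [h6, hact]
          rw [Pi.single_eq_of_ne hne2, Pi.single_eq_of_ne h]
      rw [← h5]
      exact hQ _ (Submodule.mem_map_of_mem h3)
    rw [Submodule.eq_top_iff']
    intro f2
    have hf2 : f2 = ∑ n' : OrbitOf X n₀, f2 n' • (Pi.single n' (1 : F) : OrbitOf X n₀ → F) := by
      funext j
      rw [Finset.sum_apply]
      have hterm : ∀ n' : OrbitOf X n₀, (f2 n' • (Pi.single n' (1 : F) : OrbitOf X n₀ → F)) j =
          if j = n' then f2 j else 0 := by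
        intro n'
        by_cases h : j = n'
        · subst h; simp
        · simp [Pi.single_eq_of_ne h, h]
      rw [Finset.sum_congr rfl (fun n' _ => hterm n'),
        Finset.sum_ite_eq Finset.univ j (fun _ => f2 j), if_pos (Finset.mem_univ _)]
    rw [hf2]
    exact Submodule.sum_mem S (fun n' _ => Submodule.smul_mem S _ (hsingle n'))

lemma orbit_PQ_eq (n₀ : X₂) (n : X₂) (g : X₁) :
    (orbitRep F X n₀).P n ∘ₗ (orbitRep F X n₀).Q g
      = diagPerm (fun n' : OrbitOf X n₀ => if (n' : X₂) = n then (1 : F) else 0)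
          (orbitAct X n₀ g) := by
  apply LinearMap.ext; intro f
  funext n'
  show (if (n' : X₂) = n then f (orbitAct X n₀ g n') else 0)
    = (if (n' : X₂) = n then (1 : F) else 0) * f (orbitAct X n₀ g n')
  by_cases h : (n' : X₂) = n <;> simp [h]

lemma trace_orbit_PQ (n₀ : X₂) (n : X₂) (g : X₁) :
    LinearMap.trace F (OrbitOf X n₀ → F) ((orbitRep F X n₀).P n ∘ₗ (orbitRep F X n₀).Q g)
      = ∑ n' : OrbitOf X n₀,
          if (orbitAct X n₀ g n' = n' ∧ (n' : X₂) = n) then (1 : F) else 0 := by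
  rw [orbit_PQ_eq, trace_diagPerm]
  apply Finset.sum_congr rfl
  intro n' _
  by_cases h1 : orbitAct X n₀ g n' = n' <;> by_cases h2 : (n' : X₂) = n <;>
    simp [h1, h2]

/-- The regular representation of `X₁`, graded entirely in degree `1`. -/
noncomputable def regRep (F : Type) [Field F] (X : CrossedModule X₁ X₂) [Fintype X₁] :
    XRep F X (X₁ → F) where
  P n := if n = 1 then LinearMap.id else 0
  Q g := LinearMap.funLeft F F (fun h => g⁻¹ * h)
  P_orth m n := by
    by_cases hm : m = 1 <;> by_cases hn : n = 1
    · subst hm; subst hn; simp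
    · subst hm
      rw [if_pos rfl, if_neg hn, if_neg (fun hh : (1 : X₂) = n => hn hh.symm),
        LinearMap.comp_zero]
    · subst hn
      rw [if_neg hm, if_pos rfl, if_neg hm, LinearMap.zero_comp]
    · rw [if_neg hm, if_neg hn, LinearMap.zero_comp]
      by_cases hmn : m = n
      · simp [hmn, hm]
      · simp [hmn]
  P_total := by
    rw [Finset.sum_ite_eq' Finset.univ (1 : X₂) (fun _ => LinearMap.id),
      if_pos (Finset.mem_univ _)]
  Q_one := by
    apply LinearMap.ext; intro f
    funext h
    show f (1⁻¹ * h) = f h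
    rw [inv_one, one_mul]
  Q_mul g h := by
    apply LinearMap.ext; intro f
    funext x
    show f ((g * h)⁻¹ * x) = f (h⁻¹ * (g⁻¹ * x))
    congr 1
    group
  PQ_compat m g := by
    by_cases hm : m = 1
    · subst hm
      rw [X.act_one_left]
      simp
    · have hne : X.act m g ≠ 1 := by
        intro hh
        exact hm (X.act_right_injective g (hh.trans (X.act_one_left g).symm))
      rw [if_neg hm, if_neg hne, LinearMap.zero_comp, LinearMap.comp_zero]

lemma trace_regQ_one :
    LinearMap.trace F (X₁ → F) ((regRep F X).Q 1) = (Fintype.card X₁ : F) := by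
  have h : (regRep F X).Q 1 = LinearMap.id := (regRep F X).Q_one
  rw [h, LinearMap.trace_id, Module.finrank_pi]

lemma trace_regQ_ne {g : X₁} (hg : g ≠ 1) :
    LinearMap.trace F (X₁ → F) ((regRep F X).Q g) = 0 := by
  classical
  have h : (regRep F X).Q g = diagPerm (fun _ : X₁ => (1 : F)) (fun h => g⁻¹ * h) := by
    apply LinearMap.ext; intro f
    funext h
    show f (g⁻¹ * h) = 1 * f (g⁻¹ * h)
    rw [one_mul]
  rw [h, trace_diagPerm]
  have hfix : ∀ h : X₁, ¬(g⁻¹ * h = h) := by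
    intro h hh
    apply hg
    have : g⁻¹ * h = 1 * h := by rw [hh, one_mul]
    have h2 := mul_right_cancel this
    rw [← inv_inv g, h2, inv_one]
  simp [hfix]

end Probes
section Final

variable {F : Type} [Field F] [CharZero F] {X₁ X₂ : Type} [Group X₁] [Group X₂]
  [Fintype X₁] [Fintype X₂] [DecidableEq X₂] {X : CrossedModule X₁ X₂}
  {V : Type} [AddCommGroup V] [Module F V]

lemma eq_id_of_proj_trace [FiniteDimensional F V] (e : V →ₗ[F] V) (hidem : e ∘ₗ e = e)
    (htr : LinearMap.trace F V e = (Module.finrank F V : F)) : e = LinearMap.id := by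
  have hproj : LinearMap.IsProj (LinearMap.range e) e := by
    constructor
    · intro x
      exact LinearMap.mem_range_self e x
    · rintro x ⟨y, rfl⟩
      simpa using LinearMap.congr_fun hidem y
  have htr2 := hproj.trace
  rw [htr] at htr2
  have hnat : Module.finrank F V = Module.finrank F (LinearMap.range e) := by
    exact_mod_cast htr2
  have hrange : LinearMap.range e = ⊤ := Submodule.eq_top_of_finrank_eq hnat.symm
  apply LinearMap.ext; intro v
  have hv : v ∈ LinearMap.range e := by rw [hrange]; trivial
  obtain ⟨y, rfl⟩ := hv
  simpa using LinearMap.congr_fun hidem y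

lemma pairSum_orbit (A : XRep F X V) [FiniteDimensional F V] (n₀ : X₂) :
    pairSum A (orbitRep F X n₀) = ∑ m : X₂, ∑ n' : OrbitOf X n₀,
      (if X.act (n' : X₂) (X.δ m) = (n' : X₂)
        then LinearMap.trace F V (A.Q (X.δ (n' : X₂)) ∘ₗ A.P m) else 0) := by
  unfold pairSum
  apply Finset.sum_congr rfl
  intro m _
  rw [Finset.sum_congr rfl (fun n (_ : n ∈ Finset.univ) => by
    rw [trace_orbit_PQ n₀ n (X.δ m), Finset.mul_sum])]
  rw [Finset.sum_comm]
  apply Finset.sum_congr rfl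
  intro n' _
  rw [Finset.sum_eq_single ((n' : X₂))]
  · by_cases hfix : orbitAct X n₀ (X.δ m) n' = n'
    · have hfix' : X.act (n' : X₂) (X.δ m) = (n' : X₂) := congrArg Subtype.val hfix
      rw [if_pos (⟨hfix, rfl⟩ : _ ∧ _), if_pos hfix', mul_one]
    · have hfix' : ¬X.act (n' : X₂) (X.δ m) = (n' : X₂) := fun hh => hfix (Subtype.ext hh)
      rw [if_neg (fun hc : _ ∧ _ => hfix hc.1), if_neg hfix', mul_zero]
  · intro n _ hn
    rw [if_neg (fun hc : _ ∧ _ => hn hc.2.symm), mul_zero]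
  · intro hmem
    exact absurd (Finset.mem_univ _) hmem

lemma vacType_of_pairSum (A : XRep F X V) [FiniteDimensional F V] (α : F)
    (hps : ∀ (W' : Type) (_ : AddCommGroup W') (_ : Module F W')
      (_ : FiniteDimensional F W') (B : XRep F X W'), B.IsSimple →
      pairSum A B = α * (Module.finrank F W' : F)) :
    A.VacType := by
  classical
  set d : F := (Module.finrank F V : F) with hd
  have hδ1 : X.δ 1 = 1 := map_one X.δ
  haveI huniq : Unique (OrbitOf X 1) :=
    { default := ⟨1, 1, X.act_one 1⟩
      uniq := fun n => by
        apply Subtype.ext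
        show (n : X₂) = 1
        obtain ⟨g, hg⟩ := n.2
        rw [← hg, X.act_one_left] }
  -- Step 1 : α = d
  have halpha : α = d := by
    have h1 := hps (OrbitOf X 1 → F) inferInstance inferInstance inferInstance
      (orbitRep F X 1) (orbitRep_isSimple 1)
    rw [pairSum_orbit A 1] at h1
    have hcard : Module.finrank F (OrbitOf X 1 → F) = 1 := by
      rw [Module.finrank_pi, Fintype.card_unique]
    rw [hcard] at h1
    have h2 : ∀ m : X₂, (∑ n' : OrbitOf X 1,
        if X.act (n' : X₂) (X.δ m) = (n' : X₂)
          then LinearMap.trace F V (A.Q (X.δ (n' : X₂)) ∘ₗ A.P m) else 0)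
        = LinearMap.trace F V (A.P m) := by
      intro m
      rw [Fintype.sum_unique]
      have hval : ((default : OrbitOf X 1) : X₂) = 1 := by
        obtain ⟨g, hg⟩ := (default : OrbitOf X 1).2
        rw [← hg, X.act_one_left]
      rw [hval, X.act_one_left, hδ1, A.Q_one, LinearMap.id_comp, if_pos rfl]
    rw [Finset.sum_congr rfl (fun m _ => h2 m), ← map_sum, A.P_total,
      LinearMap.trace_id, Nat.cast_one, mul_one] at h1
    exact h1.symm
  -- Step 2 : regular representation probe gives the support condition (b)
  have hall := pairSum_all A α hps
  have hreg := hall (Module.finrank F (X₁ → F)) (X₁ → F) inferInstance inferInstance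
    inferInstance (regRep F X) rfl
  have hcardX1 : Module.finrank F (X₁ → F) = Fintype.card X₁ := Module.finrank_pi F
  set s : Finset X₂ := Finset.univ.filter (fun m => X.δ m = 1) with hs
  set K : V →ₗ[F] V := ∑ m ∈ s, A.P m with hK
  have hcompute : pairSum A (regRep F X)
      = (Fintype.card X₁ : F) * LinearMap.trace F V K := by
    unfold pairSum
    have hinner : ∀ m : X₂, (∑ n : X₂, LinearMap.trace F V (A.Q (X.δ n) ∘ₗ A.P m) *
        LinearMap.trace F (X₁ → F) ((regRep F X).P n ∘ₗ (regRep F X).Q (X.δ m)))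
        = (if X.δ m = 1 then (Fintype.card X₁ : F) * LinearMap.trace F V (A.P m) else 0) := by
      intro m
      have hPn : ∀ n : X₂, (regRep F X).P n ∘ₗ (regRep F X).Q (X.δ m)
          = if n = 1 then (regRep F X).Q (X.δ m) else 0 := by
        intro n
        show (if n = 1 then LinearMap.id else 0) ∘ₗ _ = _
        by_cases hn : n = 1
        · rw [if_pos hn, if_pos hn, LinearMap.id_comp]
        · rw [if_neg hn, if_neg hn, LinearMap.zero_comp]
      rw [Finset.sum_congr rfl (fun n _ => by rw [hPn n])]
      rw [Finset.sum_eq_single (1 : X₂)]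
      · rw [if_pos rfl, hδ1, A.Q_one, LinearMap.id_comp]
        by_cases hm : X.δ m = 1
        · rw [if_pos hm, hm, trace_regQ_one, mul_comm]
        · rw [if_neg hm, trace_regQ_ne hm, mul_zero]
      · intro n _ hn
        rw [if_neg hn, map_zero, mul_zero]
      · intro h
        exact absurd (Finset.mem_univ _) h
    rw [Finset.sum_congr rfl (fun m _ => hinner m), ← Finset.sum_filter, ← hs,
      ← Finset.mul_sum]
    congr 1
    rw [hK, map_sum]
  have htrK : LinearMap.trace F V K = d := by
    rw [hcompute, hcardX1, halpha] at hreg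
    have hcard0 : (Fintype.card X₁ : F) ≠ 0 := Nat.cast_ne_zero.mpr Fintype.card_ne_zero
    exact mul_left_cancel₀ hcard0 (hreg.trans (mul_comm _ _))
  have hKid : K = LinearMap.id := by
    apply eq_id_of_proj_trace K ?_ (by rw [htrK])
    rw [hK, sumComp]
    apply Finset.sum_congr rfl
    intro m hm
    rw [compSum, Finset.sum_congr rfl (fun m' _ => A.P_orth m m'),
      Finset.sum_ite_eq s m (fun _ => A.P m), if_pos hm]
  have hb : ∀ m : X₂, X.δ m ≠ 1 → A.P m = 0 := by
    intro m hm
    have h1 : A.P m ∘ₗ K = A.P m := by rw [hKid, LinearMap.comp_id]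
    rw [hK, compSum, Finset.sum_congr rfl (fun m' _ => A.P_orth m m'),
      Finset.sum_ite_eq s m (fun _ => A.P m)] at h1
    have hnot : m ∉ s := by
      rw [hs]
      simp [hm]
    rw [if_neg hnot] at h1
    exact h1.symm
  -- Step 3 : orbit probes give trace of the action of the image of δ
  have htrQ : ∀ n₀ : X₂, LinearMap.trace F V (A.Q (X.δ n₀)) = d := by
    intro n₀
    have h1 := hps (OrbitOf X n₀ → F) inferInstance inferInstance inferInstance
      (orbitRep F X n₀) (orbitRep_isSimple n₀)
    rw [pairSum_orbit A n₀, Module.finrank_pi, halpha] at h1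
    have h2 : ∀ m : X₂, ∀ n' : OrbitOf X n₀,
        (if X.act (n' : X₂) (X.δ m) = (n' : X₂)
          then LinearMap.trace F V (A.Q (X.δ (n' : X₂)) ∘ₗ A.P m) else 0)
        = (if X.δ m = 1
          then LinearMap.trace F V (A.Q (X.δ (n' : X₂)) ∘ₗ A.P m) else 0) := by
      intro m n'
      by_cases hm : X.δ m = 1
      · rw [if_pos hm, hm, X.act_one, if_pos rfl]
      · rw [if_neg hm, hb m hm]
        simp
    rw [Finset.sum_congr rfl (fun m _ => Finset.sum_congr rfl (fun n' _ => h2 m n')),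
      Finset.sum_comm] at h1
    have h3 : ∀ n' : OrbitOf X n₀, (∑ m : X₂, if X.δ m = 1
        then LinearMap.trace F V (A.Q (X.δ (n' : X₂)) ∘ₗ A.P m) else 0)
        = LinearMap.trace F V (A.Q (X.δ (n' : X₂))) := by
      intro n'
      rw [← Finset.sum_filter, ← hs, ← map_sum, ← compSum, ← hK, hKid, LinearMap.comp_id]
    rw [Finset.sum_congr rfl (fun n' _ => h3 n')] at h1
    have h4 : ∀ n' : OrbitOf X n₀, LinearMap.trace F V (A.Q (X.δ (n' : X₂)))
        = LinearMap.trace F V (A.Q (X.δ n₀)) := by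
      intro n'
      obtain ⟨g, hg⟩ := n'.2
      rw [← hg, X.equivariance, mul_assoc, A.Q_mul, A.Q_mul,
        LinearMap.trace_comp_comm', LinearMap.comp_assoc, A.Q_comp_Q_inv,
        LinearMap.comp_id]
    rw [Finset.sum_congr rfl (fun n' _ => h4 n'), Finset.sum_const,
      Finset.card_univ] at h1
    haveI : Nonempty (OrbitOf X n₀) := ⟨⟨n₀, 1, X.act_one n₀⟩⟩
    have hcard0 : (Fintype.card (OrbitOf X n₀) : F) ≠ 0 :=
      Nat.cast_ne_zero.mpr Fintype.card_ne_zero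
    rw [← Nat.cast_smul_eq_nsmul F, smul_eq_mul] at h1
    exact mul_left_cancel₀ hcard0 (h1.trans (mul_comm _ _))
  -- Step 4 : averaging powers shows the action of the image of δ is trivial
  have ha : ∀ n₀ : X₂, A.Q (X.δ n₀) = LinearMap.id := by
    intro n₀
    set u : V →ₗ[F] V := A.Q (X.δ n₀) with hu
    set N : ℕ := Fintype.card X₁ with hNn
    have hN0 : (N : F) ≠ 0 := Nat.cast_ne_zero.mpr Fintype.card_ne_zero
    have hupow : ∀ k : ℕ, u ^ k = A.Q ((X.δ n₀) ^ k) := fun k => (A.Q_pow (X.δ n₀) k).symm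
    have hupowN : u ^ N = LinearMap.id := by
      rw [hupow N, hNn, pow_card_eq_one, A.Q_one]
    have htrpow : ∀ k : ℕ, LinearMap.trace F V (u ^ k) = d := by
      intro k
      rw [hupow k, ← map_pow]
      exact htrQ (n₀ ^ k)
    set S : V →ₗ[F] V := ∑ k ∈ Finset.range N, u ^ k with hS
    have huS : u ∘ₗ S = S := by
      rw [hS, compSum]
      have h6 : ∀ k : ℕ, u ∘ₗ ((u ^ k : V →ₗ[F] V)) = u ^ (k + 1) := by
        intro k
        rw [pow_succ']
        rfl
      rw [Finset.sum_congr rfl (fun k _ => h6 k)]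
      have h8 : u ^ N = u ^ 0 := by rw [hupowN, pow_zero]; rfl
      have h7 : (∑ k ∈ Finset.range N, u ^ (k + 1)) + u ^ 0
          = (∑ k ∈ Finset.range N, u ^ k) + u ^ N := by
        rw [← Finset.sum_range_succ', ← Finset.sum_range_succ]
      rw [h8] at h7
      exact add_right_cancel h7
    have h9 : ∀ k : ℕ, (u ^ k) ∘ₗ S = S := by
      intro k
      induction k with
      | zero =>
        rw [pow_zero]
        show LinearMap.id ∘ₗ S = S
        rw [LinearMap.id_comp]
      | succ k ih =>
        rw [pow_succ', Module.End.mul_eq_comp, LinearMap.comp_assoc, ih, huS]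
    have hSS : S ∘ₗ S = (N : F) • S := by
      nth_rewrite 1 [hS]
      rw [sumComp, Finset.sum_congr rfl (fun k _ => h9 k), Finset.sum_const,
        Finset.card_range, ← Nat.cast_smul_eq_nsmul F]
    set e : V →ₗ[F] V := (N : F)⁻¹ • S with he
    have hee : e ∘ₗ e = e := by
      rw [he, LinearMap.smul_comp, LinearMap.comp_smul, hSS, smul_smul, smul_smul]
      congr 1
      field_simp
    have htre : LinearMap.trace F V e = d := by
      rw [he, map_smul, hS, map_sum, Finset.sum_congr rfl (fun k _ => htrpow k),
        Finset.sum_const, Finset.card_range, smul_eq_mul, ← Nat.cast_smul_eq_nsmul F,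
        smul_eq_mul, ← mul_assoc, inv_mul_cancel₀ hN0, one_mul]
    have heid : e = LinearMap.id := eq_id_of_proj_trace e hee (by rw [htre])
    have hue : u ∘ₗ e = e := by
      rw [he, LinearMap.comp_smul, huS]
    calc u = u ∘ₗ e := by rw [heid, LinearMap.comp_id]
    _ = e := hue
    _ = LinearMap.id := heid
  exact ⟨ha, hb⟩

end Final
/-- The multiplicity `μ_p = dim Hom(p, V_K)` of a simple object `p` in the vacuum
object is nonzero if and only if the `p`-th row of the (normalized) `S`-matrix is
collinear to the row of the tensor unit (whose entries are `S_{1q} = d_q/|X|`);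
in that case `μ_p = d_p`. -/
theorem multiplicity_iff_collinear {F : Type} [Field F] [IsAlgClosed F] [CharZero F]
    {X₁ X₂ : Type} [Group X₁] [Group X₂] [Fintype X₁] [Fintype X₂] [DecidableEq X₂]
    {X : CrossedModule X₁ X₂} [X.δ.range.Normal]
    {V : Type} [AddCommGroup V] [Module F V] [FiniteDimensional F V]
    (A : XRep F X V) (hA : A.IsSimple) :
    (Module.finrank F (homToVacuum A) ≠ 0 ↔
      ∃ α : F, ∀ (W : Type) (_ : AddCommGroup W) (_ : Module F W)
        (_ : FiniteDimensional F W) (B : XRep F X W), B.IsSimple →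
        LinearMap.trace F (TensorProduct F V W)
            (braidAux X B.P A.Q ∘ₗ braidAux X A.P B.Q) =
          α * (Module.finrank F W : F)) ∧
    (Module.finrank F (homToVacuum A) ≠ 0 →
      Module.finrank F (homToVacuum A) = Module.finrank F V) := by
  classical
  have hfwd : Module.finrank F (homToVacuum A) ≠ 0 → A.VacType :=
    vacType_of_finrank_ne_zero A hA
  refine ⟨⟨?_, ?_⟩, ?_⟩
  · intro hμ
    refine ⟨(Module.finrank F V : F), ?_⟩
    intro W iG iM iFD B _
    rw [trace_braid A B, pairSum_of_vacType A (hfwd hμ) B]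
  · rintro ⟨α, hα⟩
    have hps : ∀ (W' : Type) (_ : AddCommGroup W') (_ : Module F W')
        (_ : FiniteDimensional F W') (B : XRep F X W'), B.IsSimple →
        pairSum A B = α * (Module.finrank F W' : F) := by
      intro W' iG iM iFD B hB
      rw [← trace_braid A B]
      exact hα W' iG iM iFD B hB
    have hvac := vacType_of_pairSum A α hps
    rw [finrank_homToVacuum_of_vacType A hvac]
    haveI : Nontrivial V := hA.1
    exact Module.finrank_pos.ne'
  · intro hμ
    exact finrank_homToVacuum_of_vacType A (hfwd hμ)
end

section
/- If a simple object p of M(X) has nonzero multiplicity in the vacuum object V_K, then its twist eigenvalue ω_p = (1/d_p) Σ_{m∈X₂} ψ_p(m, ∂m) equals 1. -/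
section AuxTwist

variable {F : Type} [Field F] {X₁ X₂ : Type} [Group X₁] [Group X₂]
  [Fintype X₁] [Fintype X₂] [DecidableEq X₂] (X : CrossedModule X₁ X₂)
  [X.δ.range.Normal]

lemma vacuum_theta_eq_id :
    (∑ m : X₂, vacuumP F X m ∘ₗ vacuumQ F X (X.δ m)) = LinearMap.id := by
  ext h p
  have hmk : ∀ m : X₂, (QuotientGroup.mk (X.δ m) : X₁ ⧸ X.δ.range) = 1 := by
    intro m
    exact (QuotientGroup.eq_one_iff _).mpr ⟨m, rfl⟩
  have hterm : ∀ m : X₂,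
      ((vacuumP F X m ∘ₗ vacuumQ F X (X.δ m)) h) p =
        if X.act m (Quotient.out p.2) = (p.1 : X₂) then h p else 0 := by
    intro m
    simp only [LinearMap.comp_apply, vacuumP, vacuumQ, LinearMap.coe_mk, AddHom.coe_mk]
    by_cases hc : X.act m (Quotient.out p.2) = (p.1 : X₂)
    · simp [hc, hmk m]
    · simp [hc]
  simp only [LinearMap.coe_sum, Finset.sum_apply, LinearMap.id_coe, id_eq]
  rw [Finset.sum_congr rfl (fun m _ => hterm m)]
  set y := Quotient.out p.2
  set x := (p.1 : X₂)
  have hcond : ∀ m : X₂, (X.act m y = x) ↔ m = X.act x y⁻¹ := by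
    intro m
    constructor
    · intro hm
      rw [← hm, ← X.act_mul, mul_inv_cancel, X.act_one]
    · intro hm
      rw [hm, ← X.act_mul, inv_mul_cancel, X.act_one]
  rw [Finset.sum_congr rfl (fun m _ => by rw [if_congr (hcond m) rfl rfl])]
  rw [Finset.sum_ite_eq' Finset.univ (X.act x y⁻¹) (fun _ => h p)]
  simp

end AuxTwist

/-- If a simple object `p` of `M(X)` has nonzero multiplicity in the vacuum object
`V_K`, then its twist eigenvalue `ω_p = (1/d_p) ∑_{m ∈ X₂} ψ_p(m, ∂m)` equals `1`,
where `ψ_p(m, g) = tr(P(m)Q(g))`; equivalently `∑_{m ∈ X₂} ψ_p(m, ∂m) = d_p`. -/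
theorem twist_of_vacuum_summand {F : Type} [Field F] [IsAlgClosed F] [CharZero F]
    {X₁ X₂ : Type} [Group X₁] [Group X₂] [Fintype X₁] [Fintype X₂] [DecidableEq X₂]
    {X : CrossedModule X₁ X₂} [X.δ.range.Normal]
    {V : Type} [AddCommGroup V] [Module F V] [FiniteDimensional F V]
    (A : XRep F X V) (hA : A.IsSimple)
    (hmul : Module.finrank F (homToVacuum A) ≠ 0) :
    (∑ m : X₂, LinearMap.trace F V (A.P m ∘ₗ A.Q (X.δ m))) =
      (Module.finrank F V : F) := by
  -- get a nonzero morphism f : A → V_K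
  have hne : homToVacuum A ≠ ⊥ := by
    intro hbot
    apply hmul
    rw [hbot]
    exact finrank_bot F _
  obtain ⟨f, hf, hf0⟩ := Submodule.exists_mem_ne_zero_of_ne_bot hne
  obtain ⟨hfP, hfQ⟩ := hf
  -- f is injective
  have hker : LinearMap.ker f = ⊥ := by
    rcases hA.2 (LinearMap.ker f)
      (fun m => by
        rintro v ⟨u, hu, rfl⟩
        have := congrFun (congrArg DFunLike.coe (hfP m)) u
        simp only [LinearMap.comp_apply] at this
        simp only [LinearMap.mem_ker] at hu ⊢
        rw [this, hu, map_zero])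
      (fun g => by
        rintro v ⟨u, hu, rfl⟩
        have := congrFun (congrArg DFunLike.coe (hfQ g)) u
        simp only [LinearMap.comp_apply] at this
        simp only [LinearMap.mem_ker] at hu ⊢
        rw [this, hu, map_zero]) with (h | h)
    · exact h
    · exact absurd (LinearMap.ker_eq_top.mp h) hf0
  -- the twist on A equals the identity
  have hcomp : f ∘ₗ (∑ m : X₂, A.P m ∘ₗ A.Q (X.δ m)) = f := by
    have : ∀ m : X₂, f ∘ₗ (A.P m ∘ₗ A.Q (X.δ m)) =
        (vacuumP F X m ∘ₗ vacuumQ F X (X.δ m)) ∘ₗ f := by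
      intro m
      rw [← LinearMap.comp_assoc, hfP m, LinearMap.comp_assoc, hfQ (X.δ m),
        ← LinearMap.comp_assoc, LinearMap.comp_assoc]
    refine LinearMap.ext fun v => ?_
    show f ((∑ m : X₂, A.P m ∘ₗ A.Q (X.δ m)) v) = f v
    calc f ((∑ m : X₂, A.P m ∘ₗ A.Q (X.δ m)) v)
        = ∑ m : X₂, (f ∘ₗ (A.P m ∘ₗ A.Q (X.δ m))) v := by
          simp [LinearMap.sum_apply, map_sum]
      _ = ∑ m : X₂, ((vacuumP F X m ∘ₗ vacuumQ F X (X.δ m)) ∘ₗ f) v :=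
          Finset.sum_congr rfl (fun m _ => by rw [this m])
      _ = (∑ m : X₂, vacuumP F X m ∘ₗ vacuumQ F X (X.δ m)) (f v) := by
          simp [LinearMap.sum_apply]
      _ = f v := by rw [vacuum_theta_eq_id]; rfl
  have htheta : (∑ m : X₂, A.P m ∘ₗ A.Q (X.δ m)) = LinearMap.id := by
    apply LinearMap.ext
    intro v
    have h1 : f ((∑ m : X₂, A.P m ∘ₗ A.Q (X.δ m)) v) = f v :=
      congrFun (congrArg DFunLike.coe hcomp) v
    have := LinearMap.ker_eq_bot.mp hker
    exact this (by simpa using h1)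
  rw [← map_sum, htheta, LinearMap.trace_id]
end

section
/- The assignment sending a representation (V, ρ) of G(X) = (ker ∂)* ⋊ (coker ∂) to the triple (V, P^ρ, Q^ρ), with P^ρ(m) = (1/|K|) Σ_{χ∈K*} χ(m) ρ(χ, I) for m ∈ K = ker ∂ and P^ρ(m) = 0 otherwise, and Q^ρ(g) = ρ(1, Ig), defines a well-defined object of M(X) which is transparent, and this extends to a fully faithful functor F : G(X)-Rep → M(X). -/
section GX

variable {X₁ X₂ : Type} [Group X₁] [Group X₂]

lemma CrossedModule.one_act (X : CrossedModule X₁ X₂) (g : X₁) : X.act 1 g = 1 := by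
  have h := X.act_hom 1 1 g
  rw [mul_one] at h
  exact mul_left_cancel (a := X.act 1 g) (by rw [mul_one]; exact h.symm)

/-- The action of `X₁` on `X₂` preserves `ker ∂`, giving an action on the kernel. -/
def CrossedModule.kerAct (X : CrossedModule X₁ X₂) (k : X.δ.ker) (g : X₁) : X.δ.ker :=
  ⟨X.act (k : X₂) g, by
    have hk : X.δ (k : X₂) = 1 := k.2
    simp [MonoidHom.mem_ker, X.equivariance, hk]⟩

lemma CrossedModule.kerAct_one (X : CrossedModule X₁ X₂) (g : X₁) :
    X.kerAct 1 g = 1 := by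
  apply Subtype.ext
  show X.act ((1 : X.δ.ker) : X₂) g = ((1 : X.δ.ker) : X₂)
  simpa using X.one_act g

lemma CrossedModule.kerAct_mul (X : CrossedModule X₁ X₂) (k k' : X.δ.ker) (g : X₁) :
    X.kerAct (k * k') g = X.kerAct k g * X.kerAct k' g := by
  apply Subtype.ext
  simpa [CrossedModule.kerAct] using X.act_hom (k : X₂) (k' : X₂) g

variable (F : Type) [Field F] (X : CrossedModule X₁ X₂) [X.δ.range.Normal]

/-- The character group `(ker ∂)* = Hom(ker ∂, F^×)` of the abelian group `ker ∂`. -/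
abbrev KChar : Type := X.δ.ker →* Fˣ

/-- The cokernel `coker ∂ = X₁ / Im ∂`. -/
abbrev Coker : Type := X₁ ⧸ X.δ.range

/-- The dual action `μ̂` of `coker ∂` on `(ker ∂)*`: `(χ^c)(k) = χ(k^{c⁻¹})`,
computed via a coset representative. -/
noncomputable def dualActQ (c : Coker X) (χ : KChar F X) : KChar F X where
  toFun k := χ (X.kerAct k (Quotient.out c)⁻¹)
  map_one' := by (try dsimp only); rw [X.kerAct_one, map_one]
  map_mul' k k' := by (try dsimp only); rw [X.kerAct_mul, map_mul]

variable {V : Type} [AddCommGroup V] [Module F V]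

/-- `ρ` is a representation of the group `G(X) = (ker ∂)* ⋊_{μ̂} (coker ∂)` on `V`
(with the semidirect product multiplication
`(χ, c) · (χ', c') = (χ^{c'} χ', c c')`). -/
def IsGRep (ρ : KChar F X × Coker X → (V →ₗ[F] V)) : Prop :=
  ρ (1, 1) = LinearMap.id ∧
  ∀ (χ χ' : KChar F X) (c c' : Coker X),
    ρ (dualActQ F X c' χ * χ', c * c') = ρ (χ, c) ∘ₗ ρ (χ', c')

variable [Fintype X₂] [DecidableEq X₂]
open Classical in

/-- The grading part of the functor `F : G(X)-Rep → M(X)`: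
`P^ρ(m) = (1/|K|) ∑_{χ ∈ K*} χ(m) ρ(χ, I)` for `m ∈ K = ker ∂`, and `0` otherwise. -/
noncomputable def FobP (ρ : KChar F X × Coker X → (V →ₗ[F] V)) (m : X₂) :
    V →ₗ[F] V :=
  if h : m ∈ X.δ.ker then
    (Nat.card X.δ.ker : F)⁻¹ • ∑ᶠ χ : KChar F X, ((χ ⟨m, h⟩ : Fˣ) : F) • ρ (χ, 1)
  else 0

/-- The action part of the functor `F : G(X)-Rep → M(X)`: `Q^ρ(g) = ρ(1, Ig)`. -/
def FobQ (ρ : KChar F X × Coker X → (V →ₗ[F] V)) (g : X₁) : V →ₗ[F] V :=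
  ρ (1, QuotientGroup.mk g)

end GX

section AuxDuality
set_option linter.unusedSectionVars false

variable {F : Type} [Field F] [IsAlgClosed F] [CharZero F]
variable {X₁ X₂ : Type} [Group X₁] [Group X₂] [Fintype X₁] [Fintype X₂] [DecidableEq X₂]

lemma aux_ker_central (X : CrossedModule X₁ X₂) {a : X₂} (ha : X.δ a = 1) (n : X₂) :
    n⁻¹ * a * n = a := by
  have h := X.peiffer n a
  rw [ha, X.act_one] at h
  have hc : a * n = n * a := by
    conv_lhs => rw [h]
    group
  rw [mul_assoc, hc, ← mul_assoc, inv_mul_cancel, one_mul]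

lemma aux_ker_comm (X : CrossedModule X₁ X₂) (a b : X.δ.ker) : a * b = b * a := by
  apply Subtype.ext
  show (a : X₂) * b = (b : X₂) * a
  have h := aux_ker_central X (MonoidHom.mem_ker.mp a.2) (b : X₂)
  conv_rhs => rw [← h]
  group

/-- `ker ∂` is commutative (it is central in `X₂` by the Peiffer identity). -/
noncomputable def auxKerCG (X : CrossedModule X₁ X₂) : CommGroup X.δ.ker :=
  { (inferInstance : Group X.δ.ker) with mul_comm := aux_ker_comm X }

lemma aux_hasEnough (X : CrossedModule X₁ X₂) :
    HasEnoughRootsOfUnity F (Monoid.exponent X.δ.ker) := by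
  haveI : NeZero ((Monoid.exponent X.δ.ker : F)) :=
    ⟨Nat.cast_ne_zero.mpr Monoid.exponent_ne_zero_of_finite⟩
  infer_instance

lemma aux_kchar_finite (X : CrossedModule X₁ X₂) : Finite (KChar F X) := by
  letI := auxKerCG X
  haveI := aux_hasEnough (F := F) X
  obtain ⟨e⟩ := CommGroup.monoidHom_mulEquiv_of_hasEnoughRootsOfUnity X.δ.ker F
  exact Finite.of_injective (fun χ => e χ) (EquivLike.injective e)

lemma aux_kchar_card (X : CrossedModule X₁ X₂) :
    Nat.card (KChar F X) = Nat.card X.δ.ker := by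
  letI := auxKerCG X
  haveI := aux_hasEnough (F := F) X
  obtain ⟨e⟩ := CommGroup.monoidHom_mulEquiv_of_hasEnoughRootsOfUnity X.δ.ker F
  exact Nat.card_congr (EquivLike.toEquiv e)

lemma aux_exists_char (X : CrossedModule X₁ X₂) {k : X.δ.ker} (hk : k ≠ 1) :
    ∃ χ : KChar F X, χ k ≠ 1 := by
  letI := auxKerCG X
  haveI := aux_hasEnough (F := F) X
  exact CommGroup.exists_apply_ne_one_of_hasEnoughRootsOfUnity X.δ.ker F hk

lemma aux_sum_shift {G : Type} [Group G] [Fintype G] {S : F} (u : G → Fˣ)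
    (hu : ∀ a b : G, u (a * b) = u a * u b) (a : G) (ha : u a ≠ 1)
    (hS : S = ∑ k : G, ((u k : Fˣ) : F)) : S = 0 := by
  have hshift : ((u a : Fˣ) : F) * S = S := by
    rw [hS, Finset.mul_sum]
    have h1 : ∀ k : G, ((u a : Fˣ) : F) * ((u k : Fˣ) : F) = ((u (a * k) : Fˣ) : F) := by
      intro k; rw [hu, Units.val_mul]
    rw [Finset.sum_congr rfl fun k _ => h1 k]
    exact Fintype.sum_equiv (Equiv.mulLeft a) _ _ (fun k => by simp)
  have h2 : (((u a : Fˣ) : F) - 1) * S = 0 := by rw [sub_mul, one_mul, hshift, sub_self]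
  rcases mul_eq_zero.mp h2 with h | h
  · exact absurd (Units.ext (by simpa using sub_eq_zero.mp h)) ha
  · exact h

open Classical in
lemma aux_sum_char (X : CrossedModule X₁ X₂) [Fintype X.δ.ker] (χ : KChar F X) :
    ∑ k : X.δ.ker, ((χ k : Fˣ) : F) = if χ = 1 then (Nat.card X.δ.ker : F) else 0 := by
  split_ifs with h
  · subst h
    simp [Nat.card_eq_fintype_card]
  · obtain ⟨k₀, hk₀⟩ : ∃ k, χ k ≠ 1 := by
      by_contra hc
      push_neg at hc
      exact h (MonoidHom.ext fun k => by rw [hc k]; rfl)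
    exact aux_sum_shift (fun k => χ k) (fun a b => map_mul χ a b) k₀ hk₀ rfl

open Classical in
lemma aux_sum_dual (X : CrossedModule X₁ X₂) [Fintype X.δ.ker] [Fintype (KChar F X)]
    (k : X.δ.ker) :
    ∑ χ : KChar F X, ((χ k : Fˣ) : F) = if k = 1 then (Nat.card X.δ.ker : F) else 0 := by
  split_ifs with h
  · subst h
    rw [← aux_kchar_card (F := F) X, Nat.card_eq_fintype_card]
    simp
  · obtain ⟨ψ, hψ⟩ := aux_exists_char (F := F) X h
    exact aux_sum_shift (fun χ : KChar F X => χ k) (fun a b => by simp) ψ hψ rfl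

end AuxDuality
section AuxAct
set_option linter.unusedSectionVars false

variable {F : Type} [Field F] [IsAlgClosed F] [CharZero F]
variable {X₁ X₂ : Type} [Group X₁] [Group X₂] [Fintype X₁] [Fintype X₂] [DecidableEq X₂]
variable (X : CrossedModule X₁ X₂) [X.δ.range.Normal]

lemma aux_kerAct_mul (k : X.δ.ker) (g h : X₁) :
    X.kerAct k (g * h) = X.kerAct (X.kerAct k g) h :=
  Subtype.ext (X.act_mul (k : X₂) g h)

lemma aux_kerAct_id (k : X.δ.ker) : X.kerAct k 1 = k := Subtype.ext (X.act_one (k : X₂))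

lemma aux_kerAct_congr (k : X.δ.ker) {g g' : X₁}
    (h : (QuotientGroup.mk g : Coker X) = QuotientGroup.mk g') :
    X.kerAct k g = X.kerAct k g' := by
  obtain ⟨n, hn⟩ := MonoidHom.mem_range.mp (QuotientGroup.eq.mp h)
  have hg' : g' = g * X.δ n := by rw [hn]; group
  apply Subtype.ext
  show X.act (k : X₂) g = X.act (k : X₂) g'
  rw [hg', X.act_mul, X.peiffer]
  have hker : X.δ (X.act (k : X₂) g) = 1 := MonoidHom.mem_ker.mp (X.kerAct k g).2
  exact (aux_ker_central X hker n).symm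

lemma aux_dualActQ_mk (g : X₁) (χ : KChar F X) (k : X.δ.ker) :
    dualActQ F X (QuotientGroup.mk g) χ k = χ (X.kerAct k g⁻¹) := by
  have h : (QuotientGroup.mk ((Quotient.out (QuotientGroup.mk g : Coker X))⁻¹) : Coker X)
      = QuotientGroup.mk g⁻¹ :=
    congrArg Inv.inv (QuotientGroup.out_eq' (QuotientGroup.mk g : Coker X))
  show χ (X.kerAct k (Quotient.out (QuotientGroup.mk g : Coker X))⁻¹) = _
  rw [aux_kerAct_congr X k h]

lemma aux_dualActQ_one (χ : KChar F X) : dualActQ F X 1 χ = χ := by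
  ext k
  have h : (1 : Coker X) = QuotientGroup.mk (1 : X₁) := rfl
  rw [h, aux_dualActQ_mk, inv_one, aux_kerAct_id]

lemma aux_dualActQ_one_char (c : Coker X) : dualActQ F X c (1 : KChar F X) = 1 := by
  ext k
  simp [dualActQ]

lemma aux_dualActQ_comp (c c' : Coker X) (χ : KChar F X) :
    dualActQ F X c (dualActQ F X c' χ) = dualActQ F X (c' * c) χ := by
  refine MonoidHom.ext fun k => ?_
  show χ (X.kerAct (X.kerAct k (Quotient.out c)⁻¹) (Quotient.out c')⁻¹)
      = χ (X.kerAct k (Quotient.out (c' * c))⁻¹)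
  rw [← aux_kerAct_mul]
  refine congrArg χ (aux_kerAct_congr X k ?_)
  have h1 : (QuotientGroup.mk ((Quotient.out c)⁻¹ * (Quotient.out c')⁻¹) : Coker X)
      = c⁻¹ * c'⁻¹ := by
    have := congrArg₂ (fun a b : Coker X => a⁻¹ * b⁻¹) (QuotientGroup.out_eq' c)
      (QuotientGroup.out_eq' c')
    exact this
  have h2 : (QuotientGroup.mk ((Quotient.out (c' * c))⁻¹) : Coker X) = (c' * c)⁻¹ :=
    congrArg Inv.inv (QuotientGroup.out_eq' (c' * c))
  rw [h1, h2, mul_inv_rev]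

lemma aux_dualActQ_leftinv (c : Coker X) (χ : KChar F X) :
    dualActQ F X c⁻¹ (dualActQ F X c χ) = χ := by
  rw [aux_dualActQ_comp, mul_inv_cancel, aux_dualActQ_one]

lemma aux_dualActQ_rightinv (c : Coker X) (χ : KChar F X) :
    dualActQ F X c (dualActQ F X c⁻¹ χ) = χ := by
  rw [aux_dualActQ_comp, inv_mul_cancel, aux_dualActQ_one]

lemma aux_dualActQ_bij (c : Coker X) : Function.Bijective (dualActQ F X c) :=
  Function.bijective_iff_has_inverse.mpr
    ⟨dualActQ F X c⁻¹, fun χ => aux_dualActQ_leftinv X c χ,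
      fun χ => aux_dualActQ_rightinv X c χ⟩

variable {V : Type} [AddCommGroup V] [Module F V]
variable (ρ : KChar F X × Coker X → (V →ₗ[F] V))

lemma aux_rep_mul_char (hρ : IsGRep F X ρ) (χ χ' : KChar F X) :
    ρ (χ, 1) ∘ₗ ρ (χ', 1) = ρ (χ * χ', 1) := by
  have h := hρ.2 χ χ' 1 1
  rw [aux_dualActQ_one, mul_one] at h
  exact h.symm

lemma aux_rep_mul_coker (hρ : IsGRep F X ρ) (c c' : Coker X) :
    ρ (1, c) ∘ₗ ρ (1, c') = ρ (1, c * c') := by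
  have h := hρ.2 1 1 c c'
  have e : (dualActQ F X c' (1 : KChar F X) * 1, c * c') = ((1 : KChar F X), c * c') := by
    refine Prod.ext ?_ rfl
    refine MonoidHom.ext fun k => ?_
    simp [dualActQ]
  rw [e] at h
  exact h.symm

lemma aux_rep_split (hρ : IsGRep F X ρ) (χ : KChar F X) (c : Coker X) :
    ρ (χ, c) = ρ (1, c) ∘ₗ ρ (χ, 1) := by
  have h := hρ.2 1 χ c 1
  have e : (dualActQ F X (1 : Coker X) (1 : KChar F X) * χ, c * 1) = (χ, c) := by
    refine Prod.ext ?_ (mul_one c)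
    refine MonoidHom.ext fun k => ?_
    simp [dualActQ]
  rw [e] at h
  exact h

lemma aux_rep_swap (hρ : IsGRep F X ρ) (χ : KChar F X) (c : Coker X) :
    ρ (χ, 1) ∘ₗ ρ (1, c) = ρ (1, c) ∘ₗ ρ (dualActQ F X c χ, 1) := by
  have h := hρ.2 χ 1 1 c
  have e : (dualActQ F X c χ * 1, 1 * c) = (dualActQ F X c χ, c) := by
    refine Prod.ext ?_ (one_mul c)
    refine MonoidHom.ext fun k => ?_
    simp
  rw [e] at h
  rw [← h]
  exact aux_rep_split X ρ hρ _ c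

lemma aux_FobP_mem [Fintype (KChar F X)] {m : X₂} (hm : m ∈ X.δ.ker) :
    FobP F X ρ m
      = (Nat.card X.δ.ker : F)⁻¹ • ∑ χ : KChar F X, ((χ ⟨m, hm⟩ : Fˣ) : F) • ρ (χ, 1) := by
  unfold FobP
  rw [dif_pos hm, finsum_eq_sum_of_fintype]

lemma aux_FobP_not_mem {m : X₂} (hm : m ∉ X.δ.ker) : FobP F X ρ m = 0 := by
  unfold FobP
  rw [dif_neg hm]

lemma aux_FobQ_one (hρ : IsGRep F X ρ) : FobQ F X ρ 1 = LinearMap.id := hρ.1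

lemma aux_FobQ_mul (hρ : IsGRep F X ρ) (g h : X₁) :
    FobQ F X ρ (g * h) = FobQ F X ρ g ∘ₗ FobQ F X ρ h :=
  (aux_rep_mul_coker X ρ hρ (QuotientGroup.mk g) (QuotientGroup.mk h)).symm

lemma aux_FobQ_delta (hρ : IsGRep F X ρ) (n : X₂) : FobQ F X ρ (X.δ n) = LinearMap.id := by
  have h : (QuotientGroup.mk (X.δ n) : Coker X) = 1 :=
    (QuotientGroup.eq_one_iff (X.δ n)).mpr ⟨n, rfl⟩
  unfold FobQ
  rw [h]
  exact hρ.1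

lemma aux_cardK_ne : (Nat.card X.δ.ker : F) ≠ 0 :=
  Nat.cast_ne_zero.mpr Nat.card_pos.ne'

end AuxAct
section AuxMain
set_option linter.unusedSectionVars false
open Finset

variable {F : Type} [Field F] [IsAlgClosed F] [CharZero F]
variable {X₁ X₂ : Type} [Group X₁] [Group X₂] [Fintype X₁] [Fintype X₂] [DecidableEq X₂]
variable (X : CrossedModule X₁ X₂) [X.δ.range.Normal]
variable {V : Type} [AddCommGroup V] [Module F V]

lemma aux_comp_sum {ι U W : Type} (s : Finset ι) [AddCommGroup U] [Module F U]
    [AddCommGroup W] [Module F W] (f : V →ₗ[F] W) (g : ι → U →ₗ[F] V) :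
    f ∘ₗ (∑ i ∈ s, g i) = ∑ i ∈ s, f ∘ₗ g i := by
  ext x; simp

lemma aux_sum_comp {ι U W : Type} (s : Finset ι) [AddCommGroup U] [Module F U]
    [AddCommGroup W] [Module F W] (f : ι → V →ₗ[F] W) (g : U →ₗ[F] V) :
    (∑ i ∈ s, f i) ∘ₗ g = ∑ i ∈ s, f i ∘ₗ g := by
  ext x; simp

lemma aux_comp_smul {U W : Type} [AddCommGroup U] [Module F U]
    [AddCommGroup W] [Module F W] (a : F) (f : V →ₗ[F] W) (g : U →ₗ[F] V) :
    f ∘ₗ (a • g) = a • (f ∘ₗ g) := by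
  ext x; simp

lemma aux_smul_comp {U W : Type} [AddCommGroup U] [Module F U]
    [AddCommGroup W] [Module F W] (a : F) (f : V →ₗ[F] W) (g : U →ₗ[F] V) :
    (a • f) ∘ₗ g = a • (f ∘ₗ g) := by
  ext x; simp

variable (ρ : KChar F X × Coker X → (V →ₗ[F] V))

lemma aux_FobQ_def (g : X₁) : FobQ F X ρ g = ρ (1, QuotientGroup.mk g) := rfl

variable [Fintype (KChar F X)] [Fintype X.δ.ker]

lemma aux_key (hρ : IsGRep F X ρ) (km kn : X.δ.ker) :
    (∑ χ : KChar F X, ((χ km : Fˣ) : F) • ρ (χ, 1))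
        * (∑ ψ : KChar F X, ((ψ kn : Fˣ) : F) • ρ (ψ, 1))
      = ∑ ψ : KChar F X,
          ((∑ χ : KChar F X, ((χ (km * kn⁻¹) : Fˣ) : F)) * ((ψ kn : Fˣ) : F)) • ρ (ψ, 1) := by
  rw [Finset.sum_mul_sum]
  have h2 : ∀ χ ψ : KChar F X,
      (((χ km : Fˣ) : F) • ρ (χ, 1)) * (((ψ kn : Fˣ) : F) • ρ (ψ, 1))
        = (((χ km : Fˣ) : F) * ((ψ kn : Fˣ) : F)) • ρ (χ * ψ, 1) := fun χ ψ => by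
    rw [smul_mul_assoc, mul_smul_comm, smul_smul, Module.End.mul_eq_comp,
      aux_rep_mul_char X ρ hρ]
  calc ∑ χ : KChar F X, ∑ ψ : KChar F X,
        (((χ km : Fˣ) : F) • ρ (χ, 1)) * (((ψ kn : Fˣ) : F) • ρ (ψ, 1))
      = ∑ χ : KChar F X, ∑ ψ : KChar F X,
          (((χ km : Fˣ) : F) * (((χ⁻¹ * ψ) kn : Fˣ) : F)) • ρ (ψ, 1) := by
        refine Finset.sum_congr rfl fun χ _ => ?_
        rw [Finset.sum_congr rfl fun ψ _ => h2 χ ψ]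
        refine Fintype.sum_equiv (Equiv.mulLeft χ) _ _ fun ψ => ?_
        simp only [Equiv.coe_mulLeft]
        exact congrArg (· • ρ (χ * ψ, 1)) (congrArg (((χ km : Fˣ) : F) * ·)
          (congrArg Units.val
            (congrArg (fun φ : KChar F X => φ kn) (inv_mul_cancel_left χ ψ).symm)))
    _ = ∑ ψ : KChar F X, ∑ χ : KChar F X,
          (((χ km : Fˣ) : F) * (((χ⁻¹ * ψ) kn : Fˣ) : F)) • ρ (ψ, 1) := Finset.sum_comm
    _ = ∑ ψ : KChar F X,
          ((∑ χ : KChar F X, ((χ (km * kn⁻¹) : Fˣ) : F)) * ((ψ kn : Fˣ) : F)) • ρ (ψ, 1) := by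
        refine Finset.sum_congr rfl fun ψ _ => ?_
        rw [← Finset.sum_smul, Finset.sum_mul]
        refine congrArg (· • ρ (ψ, 1)) (Finset.sum_congr rfl fun χ _ => ?_)
        rw [← Units.val_mul, ← Units.val_mul]
        refine congrArg Units.val ?_
        simp [map_mul, map_inv, mul_assoc]

open Classical in
lemma aux_FobP_comp (hρ : IsGRep F X ρ) (m n : X₂) :
    FobP F X ρ m ∘ₗ FobP F X ρ n = if m = n then FobP F X ρ m else 0 := by
  by_cases hm : m ∈ X.δ.ker
  · by_cases hn : n ∈ X.δ.ker
    · rw [aux_FobP_mem X ρ hm, aux_FobP_mem X ρ hn, ← Module.End.mul_eq_comp,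
        smul_mul_assoc, mul_smul_comm, smul_smul, aux_key X ρ hρ ⟨m, hm⟩ ⟨n, hn⟩,
        aux_sum_dual X ((⟨m, hm⟩ : X.δ.ker) * (⟨n, hn⟩ : X.δ.ker)⁻¹)]
      by_cases hmn : m = n
      · subst hmn
        rw [if_pos (show (⟨m, hm⟩ : X.δ.ker) * (⟨m, hn⟩ : X.δ.ker)⁻¹ = 1 from
            mul_inv_cancel _), if_pos rfl]
        have h3 : ∀ ψ : KChar F X,
            ((Nat.card X.δ.ker : F) * ((ψ (⟨m, hn⟩ : X.δ.ker) : Fˣ) : F)) • ρ (ψ, 1)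
              = (Nat.card X.δ.ker : F) • (((ψ (⟨m, hn⟩ : X.δ.ker) : Fˣ) : F) • ρ (ψ, 1)) :=
          fun ψ => mul_smul _ _ _
        rw [Finset.sum_congr rfl fun ψ _ => h3 ψ, ← Finset.smul_sum, smul_smul,
          mul_assoc, inv_mul_cancel₀ (aux_cardK_ne X), mul_one]
      · rw [if_neg (fun h => hmn (congrArg Subtype.val (mul_inv_eq_one.mp h))), if_neg hmn]
        simp
    · rw [aux_FobP_not_mem X ρ hn, LinearMap.comp_zero, if_neg (fun h : m = n => hn (h ▸ hm))]
  · rw [aux_FobP_not_mem X ρ hm, LinearMap.zero_comp]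
    by_cases hmn : m = n
    · rw [if_pos hmn]
    · rw [if_neg hmn]

open Classical in
lemma aux_FobP_total (hρ : IsGRep F X ρ) : ∑ m : X₂, FobP F X ρ m = LinearMap.id := by
  have h1 : ∑ m : X₂, FobP F X ρ m = ∑ k : X.δ.ker, FobP F X ρ (k : X₂) := by
    rw [← Finset.sum_filter_of_ne (p := (· ∈ X.δ.ker)) (fun m _ hm => by
      by_contra hc; exact hm (aux_FobP_not_mem X ρ hc))]
    exact Finset.sum_subtype _ (by simp) _
  have h2 : ∀ k : X.δ.ker, FobP F X ρ (k : X₂)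
      = (Nat.card X.δ.ker : F)⁻¹ • ∑ χ : KChar F X, ((χ k : Fˣ) : F) • ρ (χ, 1) :=
    fun k => aux_FobP_mem X ρ k.2
  rw [h1, Finset.sum_congr rfl fun k _ => h2 k, ← Finset.smul_sum, Finset.sum_comm]
  have h3 : ∀ χ : KChar F X, ∑ k : X.δ.ker, ((χ k : Fˣ) : F) • ρ (χ, 1)
      = if χ = 1 then (Nat.card X.δ.ker : F) • ρ (χ, 1) else 0 := fun χ => by
    rw [← Finset.sum_smul, aux_sum_char X χ, ite_smul, zero_smul]
  rw [Finset.sum_congr rfl fun χ _ => h3 χ,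
    Finset.sum_ite_eq' Finset.univ (1 : KChar F X)
      (fun χ => (Nat.card X.δ.ker : F) • ρ (χ, 1)),
    if_pos (Finset.mem_univ _), smul_smul, inv_mul_cancel₀ (aux_cardK_ne X), one_smul]
  exact hρ.1

open Classical in
lemma aux_FobPQ (hρ : IsGRep F X ρ) (m : X₂) (g : X₁) :
    FobP F X ρ m ∘ₗ FobQ F X ρ g = FobQ F X ρ g ∘ₗ FobP F X ρ (X.act m g) := by
  by_cases hm : m ∈ X.δ.ker
  · have hmg : X.act m g ∈ X.δ.ker := (X.kerAct ⟨m, hm⟩ g).2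
    rw [aux_FobP_mem X ρ hm, aux_FobP_mem X ρ hmg, aux_FobQ_def,
      aux_smul_comp, aux_sum_comp, aux_comp_smul, aux_comp_sum]
    refine congrArg _ ?_
    have h1 : ∀ χ : KChar F X,
        (((χ (⟨m, hm⟩ : X.δ.ker) : Fˣ) : F) • ρ (χ, 1)) ∘ₗ ρ (1, QuotientGroup.mk g)
          = ((χ (⟨m, hm⟩ : X.δ.ker) : Fˣ) : F)
              • (ρ (1, QuotientGroup.mk g) ∘ₗ ρ (dualActQ F X (QuotientGroup.mk g) χ, 1)) :=
      fun χ => by rw [aux_smul_comp, aux_rep_swap X ρ hρ]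
    rw [Finset.sum_congr rfl fun χ _ => h1 χ]
    refine Fintype.sum_bijective (dualActQ F X (QuotientGroup.mk g))
      (aux_dualActQ_bij X (QuotientGroup.mk g)) _ _ fun χ => ?_
    have h2 : (dualActQ F X (QuotientGroup.mk g) χ) (⟨X.act m g, hmg⟩ : X.δ.ker)
        = χ (⟨m, hm⟩ : X.δ.ker) := by
      have e1 : dualActQ F X (QuotientGroup.mk g) χ (⟨X.act m g, hmg⟩ : X.δ.ker)
          = χ (X.kerAct (⟨X.act m g, hmg⟩ : X.δ.ker) g⁻¹) := aux_dualActQ_mk X g χ _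
      rw [e1]
      refine congrArg χ ?_
      have e2 : (⟨X.act m g, hmg⟩ : X.δ.ker) = X.kerAct (⟨m, hm⟩ : X.δ.ker) g := rfl
      rw [e2, ← aux_kerAct_mul, mul_inv_cancel, aux_kerAct_id]
    rw [← h2]
    exact (aux_comp_smul _ _ _).symm
  · have hmg : X.act m g ∉ X.δ.ker := by
      intro hc
      apply hm
      have h2 : g⁻¹ * X.δ m * g = 1 := by
        rw [← X.equivariance]
        exact MonoidHom.mem_ker.mp hc
      have h3 := congrArg (fun x => g * x * g⁻¹) h2
      simp only [mul_one] at h3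
      rw [MonoidHom.mem_ker]
      calc X.δ m = g * (g⁻¹ * X.δ m * g) * g⁻¹ := by group
        _ = 1 := by rw [h2]; group
    rw [aux_FobP_not_mem X ρ hm, aux_FobP_not_mem X ρ hmg,
      LinearMap.zero_comp, LinearMap.comp_zero]

open Classical in
lemma aux_rep_char (hρ : IsGRep F X ρ) (χ : KChar F X) :
    ρ (χ, 1) = ∑ k : X.δ.ker, (((χ k)⁻¹ : Fˣ) : F) • FobP F X ρ (k : X₂) := by
  have h2 : ∀ k : X.δ.ker, (((χ k)⁻¹ : Fˣ) : F) • FobP F X ρ (k : X₂)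
      = (Nat.card X.δ.ker : F)⁻¹
          • ∑ ψ : KChar F X, (((χ⁻¹ * ψ) k : Fˣ) : F) • ρ (ψ, 1) := by
    intro k
    rw [aux_FobP_mem X ρ k.2, smul_smul, mul_comm, ← smul_smul, Finset.smul_sum]
    refine congrArg _ (Finset.sum_congr rfl fun ψ _ => ?_)
    rw [smul_smul, ← Units.val_mul]
    refine congrArg (· • ρ (ψ, 1)) (congrArg Units.val ?_)
    rw [MonoidHom.mul_apply, MonoidHom.inv_apply]
  rw [Finset.sum_congr rfl fun k _ => h2 k, ← Finset.smul_sum, Finset.sum_comm]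
  have h3 : ∀ ψ : KChar F X, ∑ k : X.δ.ker, (((χ⁻¹ * ψ) k : Fˣ) : F) • ρ (ψ, 1)
      = if χ⁻¹ * ψ = 1 then (Nat.card X.δ.ker : F) • ρ (ψ, 1) else 0 := fun ψ => by
    rw [← Finset.sum_smul, aux_sum_char X (χ⁻¹ * ψ), ite_smul, zero_smul]
  rw [Finset.sum_congr rfl fun ψ _ => h3 ψ]
  have h4 : ∀ ψ : KChar F X,
      (if χ⁻¹ * ψ = 1 then (Nat.card X.δ.ker : F) • ρ (ψ, 1) else 0)
        = (if ψ = χ then (Nat.card X.δ.ker : F) • ρ (ψ, 1) else 0) := fun ψ => by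
    by_cases h : ψ = χ
    · rw [if_pos h, if_pos (by rw [h]; exact inv_mul_cancel χ)]
    · rw [if_neg h, if_neg (fun hc => h (inv_mul_eq_one.mp hc).symm)]
  rw [Finset.sum_congr rfl fun ψ _ => h4 ψ,
    Finset.sum_ite_eq' Finset.univ χ (fun ψ => (Nat.card X.δ.ker : F) • ρ (ψ, 1)),
    if_pos (Finset.mem_univ _), smul_smul, inv_mul_cancel₀ (aux_cardK_ne X), one_smul]

open TensorProduct in
lemma aux_braid_left {W : Type} [AddCommGroup W] [Module F W] (B : XRep F X W)
    (hρ : IsGRep F X ρ) :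
    braidAux X (FobP F X ρ) B.Q = (TensorProduct.comm F V W).toLinearMap := by
  apply TensorProduct.ext'
  intro v w
  unfold braidAux
  simp only [LinearMap.sum_apply, LinearMap.coe_comp, Function.comp_apply,
    LinearEquiv.coe_coe, TensorProduct.comm_tmul, TensorProduct.map_tmul]
  have h : ∀ m : X₂, (B.Q (X.δ m)) w ⊗ₜ[F] (FobP F X ρ m) v
      = w ⊗ₜ[F] (FobP F X ρ m) v := by
    intro m
    by_cases hm : m ∈ X.δ.ker
    · rw [show X.δ m = 1 from MonoidHom.mem_ker.mp hm, B.Q_one, LinearMap.id_apply]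
    · rw [aux_FobP_not_mem X ρ hm]
      simp
  rw [Finset.sum_congr rfl fun m _ => h m, ← TensorProduct.tmul_sum,
    ← LinearMap.sum_apply, aux_FobP_total X ρ hρ, LinearMap.id_apply]

open TensorProduct in
lemma aux_braid_right {W : Type} [AddCommGroup W] [Module F W] (B : XRep F X W)
    (hρ : IsGRep F X ρ) :
    braidAux X B.P (FobQ F X ρ) = (TensorProduct.comm F W V).toLinearMap := by
  apply TensorProduct.ext'
  intro w v
  unfold braidAux
  simp only [LinearMap.sum_apply, LinearMap.coe_comp, Function.comp_apply,
    LinearEquiv.coe_coe, TensorProduct.comm_tmul, TensorProduct.map_tmul]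
  have h : ∀ m : X₂, (FobQ F X ρ (X.δ m)) v ⊗ₜ[F] (B.P m) w = v ⊗ₜ[F] (B.P m) w := by
    intro m
    rw [aux_FobQ_delta X ρ hρ, LinearMap.id_apply]
  rw [Finset.sum_congr rfl fun m _ => h m, ← TensorProduct.tmul_sum,
    ← LinearMap.sum_apply, B.P_total, LinearMap.id_apply]

end AuxMain
/-- Sending a `G(X)`-representation `(V, ρ)` (where `G(X) = (ker ∂)* ⋊ (coker ∂)`)
to `(V, P^ρ, Q^ρ)` with `P^ρ(m) = (1/|K|) ∑_{χ ∈ K*} χ(m) ρ(χ, I)` for `m ∈ K`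
(zero otherwise) and `Q^ρ(g) = ρ(1, Ig)` gives a well-defined object of `M(X)`
which is transparent, and this assignment is a fully faithful functor
`F : G(X)-Rep → M(X)`. -/
theorem functor_F_well_defined {F : Type} [Field F] [IsAlgClosed F] [CharZero F]
    {X₁ X₂ : Type} [Group X₁] [Group X₂] [Fintype X₁] [Fintype X₂] [DecidableEq X₂]
    (X : CrossedModule X₁ X₂) [X.δ.range.Normal]
    {V : Type} [AddCommGroup V] [Module F V] [FiniteDimensional F V]
    (ρ : KChar F X × Coker X → (V →ₗ[F] V)) (hρ : IsGRep F X ρ) :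
    -- `(V, P^ρ, Q^ρ)` is an object of `M(X)`
    (∀ m n : X₂, FobP F X ρ m ∘ₗ FobP F X ρ n = if m = n then FobP F X ρ m else 0) ∧
    ((∑ m : X₂, FobP F X ρ m) = LinearMap.id) ∧
    (FobQ F X ρ 1 = LinearMap.id) ∧
    (∀ g h : X₁, FobQ F X ρ (g * h) = FobQ F X ρ g ∘ₗ FobQ F X ρ h) ∧
    (∀ (m : X₂) (g : X₁),
      FobP F X ρ m ∘ₗ FobQ F X ρ g = FobQ F X ρ g ∘ₗ FobP F X ρ (X.act m g)) ∧
    -- it is transparent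
    (∀ (W : Type) (_ : AddCommGroup W) (_ : Module F W) (B : XRep F X W),
      braidAux X B.P (FobQ F X ρ) ∘ₗ braidAux X (FobP F X ρ) B.Q = LinearMap.id ∧
      braidAux X (FobP F X ρ) B.Q ∘ₗ braidAux X B.P (FobQ F X ρ) = LinearMap.id) ∧
    -- the functor `F` is fully faithful
    (∀ (V' : Type) (_ : AddCommGroup V') (_ : Module F V') (_ : FiniteDimensional F V')
      (ρ' : KChar F X × Coker X → (V' →ₗ[F] V')) (_ : IsGRep F X ρ')
      (f : V →ₗ[F] V'),
      (∀ p : KChar F X × Coker X, f ∘ₗ ρ p = ρ' p ∘ₗ f) ↔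
        ((∀ m : X₂, f ∘ₗ FobP F X ρ m = FobP F X ρ' m ∘ₗ f) ∧
         (∀ g : X₁, f ∘ₗ FobQ F X ρ g = FobQ F X ρ' g ∘ₗ f))) := by

  classical
  haveI : Finite (KChar F X) := aux_kchar_finite X
  haveI : Fintype (KChar F X) := Fintype.ofFinite _
  haveI : Fintype X.δ.ker := Fintype.ofFinite _
  refine ⟨aux_FobP_comp X ρ hρ, aux_FobP_total X ρ hρ, aux_FobQ_one X ρ hρ,
    aux_FobQ_mul X ρ hρ, aux_FobPQ X ρ hρ, ?_, ?_⟩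
  · intro W hW hMW B
    letI := hW
    letI := hMW
    constructor
    · rw [aux_braid_left X ρ B hρ, aux_braid_right X ρ B hρ]
      apply TensorProduct.ext'
      intro v w
      simp
    · rw [aux_braid_left X ρ B hρ, aux_braid_right X ρ B hρ]
      apply TensorProduct.ext'
      intro w v
      simp
  · intro V' hV' hMV' hFD ρ' hρ' f
    letI := hV'
    letI := hMV'
    letI := hFD
    constructor
    · intro hf
      refine ⟨fun m => ?_, fun g => hf (1, QuotientGroup.mk g)⟩
      by_cases hm : m ∈ X.δ.ker
      · rw [aux_FobP_mem X ρ hm, aux_FobP_mem X ρ' hm, aux_comp_smul, LinearMap.smul_comp,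
          aux_comp_sum, aux_sum_comp]
        refine congrArg _ (Finset.sum_congr rfl fun χ _ => ?_)
        rw [aux_comp_smul, LinearMap.smul_comp, hf (χ, 1)]
      · rw [aux_FobP_not_mem X ρ hm, aux_FobP_not_mem X ρ' hm, LinearMap.comp_zero,
          LinearMap.zero_comp]
    · rintro ⟨hP, hQ⟩ ⟨χ, c⟩
      have hQc : f ∘ₗ ρ (1, c) = ρ' (1, c) ∘ₗ f := by
        rw [← QuotientGroup.out_eq' c]
        exact hQ (Quotient.out c)
      have hχ : f ∘ₗ ρ (χ, 1) = ρ' (χ, 1) ∘ₗ f := by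
        rw [aux_rep_char X ρ hρ χ, aux_rep_char X ρ' hρ' χ, aux_comp_sum, aux_sum_comp]
        refine Finset.sum_congr rfl fun k _ => ?_
        rw [aux_comp_smul, LinearMap.smul_comp, hP (k : X₂)]
      rw [aux_rep_split X ρ hρ χ c, aux_rep_split X ρ' hρ' χ c]
      calc f ∘ₗ (ρ (1, c) ∘ₗ ρ (χ, 1)) = (f ∘ₗ ρ (1, c)) ∘ₗ ρ (χ, 1) := rfl
        _ = (ρ' (1, c) ∘ₗ f) ∘ₗ ρ (χ, 1) := by rw [hQc]
        _ = ρ' (1, c) ∘ₗ (f ∘ₗ ρ (χ, 1)) := rfl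
        _ = ρ' (1, c) ∘ₗ (ρ' (χ, 1) ∘ₗ f) := by rw [hχ]
        _ = (ρ' (1, c) ∘ₗ ρ' (χ, 1)) ∘ₗ f := rfl
end
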